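/- arXiv:1506.01912 — 6 statements merged into one kernel-verified Lean document; each statement's English description precedes it below -/
import Mathlib

section
/- Let 0 ≤ t and h > 0 with t + h ≤ T, let z ∈ ℝ^d, and let R, P > 0 be such that ‖v‖ ≤ P whenever s ∈ [0,T], dist(y, X₀) ≤ R and v ∈ F(s,y). Let x : [t, t+h] → ℝ^d be such that there is an integrable w : (t, t+h) → ℝ^d with x(s) = x(t) + ∫_t^s w(θ) dθ for all s ∈ [t, t+h], w(s) ∈ F(s, x(s)) for almost every s ∈ (t, t+h), and dist(x(s), X₀) ≤ R for all s ∈ [t, t+h]. Then there exists v ∈ F(t,z) such that ‖x(t+h) − (z + h·v)‖ ≤ (1 + Lh)·‖x(t) − z‖ + L(P+1)·h². -/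
open MeasureTheory Metric Set Filter
open scoped RealInnerProductSpace

noncomputable section

/-- Euclidean space `ℝ^d`. -/
abbrev Euc (d : ℕ) : Type := EuclideanSpace ℝ (Fin d)

/-- `x` solves the differential inclusion `ẋ ∈ F(t,x)` on `[0,τ]`
with integrable derivative `v`. -/
def SolOn {d : ℕ} (F : ℝ → Euc d → Set (Euc d)) (τ : ℝ) (x v : ℝ → Euc d) : Prop :=
  IntegrableOn v (Ioo (0:ℝ) τ) ∧
  (∀ t ∈ Icc (0:ℝ) τ, x t = x 0 + ∫ s in (0:ℝ)..t, v s) ∧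
  (∀ᵐ s ∂(volume.restrict (Ioo (0:ℝ) τ)), v s ∈ F s (x s))

/-- the unconstrained solution set `S^u(τ)`. -/
def Su {d : ℕ} (F : ℝ → Euc d → Set (Euc d)) (X₀ : Set (Euc d)) (τ : ℝ) :
    Set (ℝ → Euc d) :=
  {x | x 0 ∈ X₀ ∧ ∃ v, SolOn F τ x v}

/-- the constrained solution set `S^c(τ)`. -/
def Sc {d : ℕ} (F : ℝ → Euc d → Set (Euc d)) (A : ℝ → Set (Euc d)) (X₀ : Set (Euc d))
    (τ : ℝ) : Set (ℝ → Euc d) :=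
  {x | x ∈ Su F X₀ τ ∧ ∀ t ∈ Icc (0:ℝ) τ, x t ∈ A t}

/-- the solution set `S^u_N(ν,β,δ)` of the (inflated, relaxed) Euler scheme. -/
def SuN {d : ℕ} (F : ℝ → Euc d → Set (Euc d)) (X₀ : Set (Euc d)) (T : ℝ) (N ν : ℕ)
    (β δ : ℝ) : Set (ℕ → Euc d) :=
  {y | infDist (y 0) X₀ ≤ δ ∧
    ∀ n < ν, ∃ v ∈ F ((n : ℝ) * (T / N)) (y n),
      ‖y (n + 1) - (y n + (T / N) • v)‖ ≤ β}

/-- the constrained solution set `S^c_N(ν,β,δ)` of the Euler scheme. -/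
def ScN {d : ℕ} (F : ℝ → Euc d → Set (Euc d)) (A : ℝ → Set (Euc d)) (X₀ : Set (Euc d))
    (T : ℝ) (N ν : ℕ) (β δ : ℝ) : Set (ℕ → Euc d) :=
  {y | y ∈ SuN F X₀ T N ν β δ ∧
    ∀ n ≤ ν, infDist (y n) (A ((n : ℝ) * (T / N))) ≤ δ}

/-- `M = sup {‖v‖ : x ∈ X₀, v ∈ F(0,x)}`. -/
def Mconst {d : ℕ} (F : ℝ → Euc d → Set (Euc d)) (X₀ : Set (Euc d)) : ℝ :=
  sSup {r : ℝ | ∃ x ∈ X₀, ∃ v ∈ F 0 x, r = ‖v‖}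

/-- distance of a point of `ℝ × ℝ^d × ℝ^d` (with norm `|r| + ‖x‖ + ‖v‖`) to the
graph `{(s,x,v) : s ∈ [0,T], v ∈ F(s,x)}` of `F`. -/
def graphDist {d : ℕ} (F : ℝ → Euc d → Set (Euc d)) (T : ℝ)
    (p : ℝ × Euc d × Euc d) : ℝ :=
  sInf {r : ℝ | ∃ s ∈ Icc (0:ℝ) T, ∃ x, ∃ v ∈ F s x,
    r = |p.1 - s| + ‖p.2.1 - x‖ + ‖p.2.2 - v‖}

/-- `τ* = sup {τ ∈ (0,T] : S^c(τ) ≠ ∅}`. -/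
def tauStar {d : ℕ} (F : ℝ → Euc d → Set (Euc d)) (A : ℝ → Set (Euc d))
    (X₀ : Set (Euc d)) (T : ℝ) : ℝ :=
  sSup {τ : ℝ | 0 < τ ∧ τ ≤ T ∧ (Sc F A X₀ τ).Nonempty}

theorem statement_3
    (d : ℕ) (hd : 1 ≤ d) (T L : ℝ) (hT : 0 < T) (hL : 0 < L)
    (F : ℝ → Euc d → Set (Euc d))
    (hFne : ∀ t ∈ Icc (0:ℝ) T, ∀ x : Euc d, (F t x).Nonempty)
    (hFcvx : ∀ t ∈ Icc (0:ℝ) T, ∀ x : Euc d, Convex ℝ (F t x))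
    (hFcpt : ∀ t ∈ Icc (0:ℝ) T, ∀ x : Euc d, IsCompact (F t x))
    (hFlip : ∀ t ∈ Icc (0:ℝ) T, ∀ t' ∈ Icc (0:ℝ) T, ∀ x x' : Euc d,
      hausdorffDist (F t x) (F t' x') ≤ L * |t - t'| + L * ‖x - x'‖)
    (X₀ : Set (Euc d)) (hX₀ne : X₀.Nonempty) (hX₀cpt : IsCompact X₀)
    (t h : ℝ) (ht : 0 ≤ t) (hh : 0 < h) (hth : t + h ≤ T) (z : Euc d)
    (R P : ℝ) (hR : 0 < R) (hP : 0 < P)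
    (hPbd : ∀ s ∈ Icc (0:ℝ) T, ∀ y : Euc d, infDist y X₀ ≤ R →
      ∀ v ∈ F s y, ‖v‖ ≤ P)
    (x w : ℝ → Euc d)
    (hw : IntegrableOn w (Ioo t (t + h)))
    (hx : ∀ s ∈ Icc t (t + h), x s = x t + ∫ θ in t..s, w θ)
    (hwF : ∀ᵐ s ∂(volume.restrict (Ioo t (t + h))), w s ∈ F s (x s))
    (hxR : ∀ s ∈ Icc t (t + h), infDist (x s) X₀ ≤ R) :
    ∃ v ∈ F t z,
      ‖x (t + h) - (z + h • v)‖ ≤ (1 + L * h) * ‖x t - z‖ + L * (P + 1) * h ^ 2 := by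
  have htT : t ∈ Icc (0:ℝ) T := ⟨ht, by linarith⟩
  have hFtz_ne := hFne t htT z
  have hFtz_cpt := hFcpt t htT z
  have hFtz_cvx := hFcvx t htT z
  set ε : ℝ := L * ‖x t - z‖ + L * (P + 1) * h with hεdef
  have hε0 : 0 ≤ ε := by positivity
  set I : Set ℝ := Ioo t (t + h) with hIdef
  have hIsub : ∀ θ ∈ I, θ ∈ Icc t (t + h) := fun θ hθ => ⟨hθ.1.le, hθ.2.le⟩
  have hwF' : ∀ᵐ θ ∂volume, θ ∈ I → w θ ∈ F θ (x θ) :=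
    (ae_restrict_iff' measurableSet_Ioo).1 hwF
  -- a.e. bound on ‖w‖
  have hPw : ∀ᵐ θ ∂volume, θ ∈ I → ‖w θ‖ ≤ P := by
    filter_upwards [hwF'] with θ hθF hθI
    exact hPbd θ ⟨by linarith [hθI.1], by linarith [hθI.2.le]⟩ (x θ)
      (hxR θ (hIsub θ hθI)) _ (hθF hθI)
  -- pointwise growth bound
  have hxbd : ∀ θ ∈ Icc t (t + h), ‖x θ - x t‖ ≤ P * h := by
    intro θ hθ
    have h1 : x θ - x t = ∫ s in t..θ, w s := by rw [hx θ hθ]; abel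
    rw [h1]
    have hae : ∀ᵐ s ∂volume, s ∈ Set.uIoc t θ → ‖w s‖ ≤ P := by
      have hne : ∀ᵐ s : ℝ ∂volume, s ≠ θ := by
        have : (volume : Measure ℝ) {θ} = 0 := measure_singleton θ
        exact (ae_iff).2 (by simpa using this)
      filter_upwards [hPw, hne] with s hs hsne hsI
      rw [uIoc_of_le hθ.1] at hsI
      refine hs ⟨hsI.1, ?_⟩
      rcases lt_or_eq_of_le hθ.2 with h' | h'
      · exact lt_of_le_of_lt hsI.2 h'
      · exact lt_of_le_of_ne (h' ▸ hsI.2) (by rw [← h']; exact hsne)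
    calc ‖∫ s in t..θ, w s‖ ≤ P * |θ - t| :=
          intervalIntegral.norm_integral_le_of_norm_le_const_ae hae
      _ ≤ P * h := by
          rw [abs_of_nonneg (by linarith [hθ.1])]
          nlinarith [hθ.2]
  -- hausdorff edist finiteness
  have hedist : ∀ θ ∈ Icc (0:ℝ) T, ∀ y : Euc d,
      EMetric.hausdorffEdist (F θ y) (F t z) ≠ ⊤ := fun θ hθ y =>
    hausdorffEdist_ne_top_of_nonempty_of_bounded (hFne θ hθ y) hFtz_ne
      ((hFcpt θ hθ y).isBounded) hFtz_cpt.isBounded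
  -- a.e. membership in the thickening
  have hmemK : ∀ᵐ θ ∂(volume.restrict I), w θ ∈ cthickening ε (F t z) := by
    rw [ae_restrict_iff' measurableSet_Ioo]
    filter_upwards [hwF'] with θ hθF hθI
    have hθT : θ ∈ Icc (0:ℝ) T := ⟨by linarith [hθI.1], by linarith [hθI.2.le]⟩
    have h1 : infDist (w θ) (F t z) ≤ hausdorffDist (F θ (x θ)) (F t z) :=
      infDist_le_hausdorffDist_of_mem (hθF hθI) (hedist θ hθT (x θ))
    have h2 := hFlip θ hθT t htT (x θ) z
    have h3 : ‖x θ - z‖ ≤ ‖x t - z‖ + P * h := by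
      calc ‖x θ - z‖ = ‖(x θ - x t) + (x t - z)‖ := by congr 1; abel
        _ ≤ ‖x θ - x t‖ + ‖x t - z‖ := norm_add_le _ _
        _ ≤ ‖x t - z‖ + P * h := by linarith [hxbd θ (hIsub θ hθI)]
    have h4 : |θ - t| ≤ h := by
      rw [abs_of_nonneg (by linarith [hθI.1.le])]; linarith [hθI.2.le]
    have h5 : infDist (w θ) (F t z) ≤ ε := by nlinarith [hL.le]
    rw [mem_cthickening_iff]
    have := infEdist_ne_top hFtz_ne (x := w θ)
    rw [← ENNReal.ofReal_toReal this]
    exact ENNReal.ofReal_le_ofReal h5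
  -- measure facts
  have hμI : volume I = ENNReal.ofReal h := by
    rw [hIdef, Real.volume_Ioo]; ring_nf
  have hμI0 : volume I ≠ 0 := by
    rw [hμI]; simp [ENNReal.ofReal_eq_zero, not_le, hh]
  have hμItop : volume I ≠ ⊤ := by rw [hμI]; exact ENNReal.ofReal_ne_top
  -- average belongs to thickening
  have havg : (⨍ θ in I, w θ ∂volume) ∈ cthickening ε (F t z) :=
    (hFtz_cvx.cthickening ε).set_average_mem isClosed_cthickening hμI0 hμItop hmemK hw
  set ubar : Euc d := ⨍ θ in I, w θ ∂volume with hubardef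
  have hubareq : ∫ θ in I, w θ = h • ubar := by
    rw [hubardef, setAverage_eq, measureReal_def, hμI, ENNReal.toReal_ofReal hh.le, smul_smul,
      mul_inv_cancel₀ hh.ne', one_smul]
  have hubard : infDist ubar (F t z) ≤ ε := by
    rw [mem_cthickening_iff] at havg
    have := ENNReal.toReal_mono ENNReal.ofReal_ne_top havg
    rwa [ENNReal.toReal_ofReal hε0] at this
  obtain ⟨v, hv, hveq⟩ := hFtz_cpt.exists_infDist_eq_dist hFtz_ne ubar
  refine ⟨v, hv, ?_⟩
  have hxth : x (t + h) = x t + h • ubar := by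
    rw [hx (t + h) ⟨by linarith, le_rfl⟩,
      intervalIntegral.integral_of_le (by linarith : t ≤ t + h),
      integral_Ioc_eq_integral_Ioo, ← hIdef, hubareq]
  have hkey : dist ubar v ≤ ε := hveq ▸ hubard
  have hsplit : x (t + h) - (z + h • v) = (x t - z) + h • (ubar - v) := by
    rw [hxth, smul_sub]; abel
  calc ‖x (t + h) - (z + h • v)‖ = ‖(x t - z) + h • (ubar - v)‖ := by rw [hsplit]
    _ ≤ ‖x t - z‖ + ‖h • (ubar - v)‖ := norm_add_le _ _
    _ = ‖x t - z‖ + h * dist ubar v := by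
        rw [norm_smul, Real.norm_of_nonneg hh.le, dist_eq_norm]
    _ ≤ ‖x t - z‖ + h * ε := by nlinarith
    _ = (1 + L * h) * ‖x t - z‖ + L * (P + 1) * h ^ 2 := by rw [hεdef]; ring
end
end

section
/- The supremum τ* is attained as a maximum: τ* ∈ (0,T] and S^c(τ*) ≠ ∅. -/
open MeasureTheory Metric Set Filter
open scoped ENNReal NNReal Topology
open scoped RealInnerProductSpace

noncomputable section

lemma abs_coord_le {d : ℕ} (y : Euc d) (i : Fin d) : |y i| ≤ ‖y‖ := by
  rw [EuclideanSpace.norm_eq]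
  have h1 : |y i| = Real.sqrt (|y i|^2) := by
    rw [Real.sqrt_sq_eq_abs, abs_abs]
  rw [h1]
  apply Real.sqrt_le_sqrt
  have := Finset.single_le_sum (f := fun j => ‖y j‖^2) (fun j _ => by positivity)
    (Finset.mem_univ i)
  simpa [Real.norm_eq_abs] using this

/-- A Lipschitz function `ℝ → ℝ^d` is the integral of a bounded measurable density. -/
lemma lipschitz_exists_density {d : ℕ} (K : ℝ) (hK : 0 ≤ K) (x : ℝ → Euc d)
    (hx : ∀ a b : ℝ, ‖x a - x b‖ ≤ K * |a - b|) :
    ∃ v : ℝ → Euc d, Measurable v ∧ (∀ s, ‖v s‖ ≤ (d : ℝ) * K + 1) ∧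
      ∀ a b : ℝ, a ≤ b → x b - x a = ∫ s in a..b, v s := by
  classical
  have hxc : Continuous x := by
    have : LipschitzWith (Real.toNNReal K) x := by
      rw [lipschitzWith_iff_dist_le_mul]
      intro a b
      rw [dist_eq_norm, Real.coe_toNNReal K hK, Real.dist_eq]
      exact hx a b
    exact this.continuous
  have hco : ∀ (i : Fin d) (a b : ℝ), a ≤ b → |x b i - x a i| ≤ K * (b - a) := by
    intro i a b hab
    have h1 : |x b i - x a i| ≤ ‖x b - x a‖ := by
      have := abs_coord_le (x b - x a) i
      simpa using this
    have h2 := hx b a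
    rw [abs_sub_comm, abs_of_nonpos (by linarith)] at h2
    exact h1.trans (by linarith)
  have hcoord : ∀ i : Fin d, Continuous fun t => x t i :=
    fun i => (EuclideanSpace.proj (𝕜 := ℝ) i).continuous.comp hxc
  -- Stieltjes functions for each coordinate
  set f : Fin d → StieltjesFunction ℝ := fun i =>
    { toFun := fun t => x t i + K * t
      mono' := by
        intro a b hab
        have := hco i a b hab
        have h2 : -(K * (b - a)) ≤ x b i - x a i := neg_le_of_abs_le this
        dsimp only
        nlinarith
      right_continuous' := by
        intro t
        exact ((hcoord i).add (continuous_const.mul continuous_id)).continuousWithinAt }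
    with hf
  set g : Fin d → StieltjesFunction ℝ := fun i =>
    { toFun := fun t => K * t - x t i
      mono' := by
        intro a b hab
        have := hco i a b hab
        have h2 : x b i - x a i ≤ K * (b - a) := le_of_abs_le this
        dsimp only
        nlinarith
      right_continuous' := by
        intro t
        exact ((continuous_const.mul continuous_id).sub (hcoord i)).continuousWithinAt }
    with hg
  set ν : Measure ℝ := (ENNReal.ofReal (2 * K)) • volume with hν
  have key : ∀ i, (f i).measure + (g i).measure = ν := by
    intro i
    haveI : IsLocallyFiniteMeasure ((f i).measure + (g i).measure) := by
      constructor
      intro p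
      obtain ⟨s, hs, h1⟩ := (f i).measure.finiteAt_nhds p
      obtain ⟨t, ht, h2⟩ := (g i).measure.finiteAt_nhds p
      refine ⟨s ∩ t, inter_mem hs ht, ?_⟩
      rw [Measure.add_apply]
      exact ENNReal.add_lt_top.2 ⟨lt_of_le_of_lt (measure_mono inter_subset_left) h1,
        lt_of_le_of_lt (measure_mono inter_subset_right) h2⟩
    refine MeasureTheory.Measure.ext_of_Ioc _ _ (fun a b hab => ?_)
    rw [Measure.add_apply, StieltjesFunction.measure_Ioc, StieltjesFunction.measure_Ioc]
    have h1 : (f i) b - (f i) a = (x b i - x a i) + K * (b - a) := by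
      simp only [hf]; ring
    have h2 : (g i) b - (g i) a = K * (b - a) - (x b i - x a i) := by
      simp only [hg]; ring
    have hfa : 0 ≤ (f i) b - (f i) a := sub_nonneg.2 ((f i).mono hab.le)
    have hga : 0 ≤ (g i) b - (g i) a := sub_nonneg.2 ((g i).mono hab.le)
    rw [← ENNReal.ofReal_add hfa hga, h1, h2]
    have : x b i - x a i + K * (b - a) + (K * (b - a) - (x b i - x a i))
        = (2 * K) * (b - a) := by ring
    rw [this, hν, Measure.smul_apply, Real.volume_Ioc, smul_eq_mul,
      ← ENNReal.ofReal_mul (by linarith)]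
  have hle : ∀ i, (f i).measure ≤ ν := by
    intro i
    rw [← key i]
    exact Measure.le_add_right le_rfl
  have hac : ∀ i, (f i).measure ≪ volume := by
    intro i
    exact Measure.absolutelyContinuous_of_le_smul (hle i)
  set ρ : Fin d → ℝ → ℝ≥0∞ := fun i => ((f i).measure).rnDeriv volume with hρ
  have hρm : ∀ i, Measurable (ρ i) := fun i => Measure.measurable_rnDeriv _ _
  have hwd : ∀ i, volume.withDensity (ρ i) = (f i).measure := by
    intro i
    exact Measure.withDensity_rnDeriv_eq _ _ (hac i)
  have hbd : ∀ i, ρ i ≤ᵐ[volume] fun _ => ENNReal.ofReal (2 * K) := by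
    intro i
    refine ae_le_of_forall_setLIntegral_le_of_sigmaFinite₀ (hρm i).aemeasurable
      (fun s hs _ => ?_)
    rw [setLIntegral_const]
    calc ∫⁻ t in s, ρ i t = volume.withDensity (ρ i) s := (withDensity_apply _ hs).symm
      _ = (f i).measure s := by rw [hwd i]
      _ ≤ ν s := hle i s
      _ = ENNReal.ofReal (2 * K) * volume s := by rw [hν, Measure.smul_apply, smul_eq_mul]
  set w : ℝ → Fin d → ℝ := fun s i =>
    (min (ρ i s) (ENNReal.ofReal (2 * K))).toReal - K with hw
  set v : ℝ → Euc d := fun s => (WithLp.equiv 2 (Fin d → ℝ)).symm (w s) with hv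
  have hvi : ∀ s i, v s i = (min (ρ i s) (ENNReal.ofReal (2 * K))).toReal - K := by
    intro s i
    simp [hv, hw, WithLp.equiv_symm_apply]
  have hvb : ∀ s i, |v s i| ≤ K := by
    intro s i
    rw [hvi]
    have h1 : (min (ρ i s) (ENNReal.ofReal (2 * K))).toReal ≤ 2 * K := by
      refine le_trans (ENNReal.toReal_mono ENNReal.ofReal_ne_top (min_le_right _ _)) ?_
      rw [ENNReal.toReal_ofReal (by linarith)]
    have h2 : 0 ≤ (min (ρ i s) (ENNReal.ofReal (2 * K))).toReal := ENNReal.toReal_nonneg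
    rw [abs_le]; constructor <;> linarith
  have hvm : Measurable v := by
    have hwm : Measurable w := by
      refine measurable_pi_lambda _ (fun i => ?_)
      exact (((hρm i).min measurable_const).ennreal_toReal).sub measurable_const
    exact (PiLp.continuousLinearEquiv 2 ℝ (fun _ : Fin d => ℝ)).symm.continuous.measurable.comp
      hwm
  have hvnorm : ∀ s, ‖v s‖ ≤ (d : ℝ) * K + 1 := by
    intro s
    rw [EuclideanSpace.norm_eq]
    have h1 : ∑ i, ‖v s i‖ ^ 2 ≤ (d : ℝ) * K ^ 2 := by
      calc ∑ i, ‖v s i‖ ^ 2 ≤ ∑ _i : Fin d, K ^ 2 := by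
            refine Finset.sum_le_sum (fun i _ => ?_)
            rw [Real.norm_eq_abs]
            nlinarith [hvb s i, abs_nonneg (v s i)]
        _ = (d : ℝ) * K ^ 2 := by simp [mul_comm]
    calc Real.sqrt (∑ i, ‖v s i‖ ^ 2) ≤ Real.sqrt ((d : ℝ) * K ^ 2) := Real.sqrt_le_sqrt h1
      _ = Real.sqrt d * K := by
          rw [Real.sqrt_mul (Nat.cast_nonneg d), Real.sqrt_sq hK]
      _ ≤ (d : ℝ) * K + 1 := by
          have hsq : Real.sqrt d ≤ (d : ℝ) := by
            have h2 : (d : ℝ) ≤ (d : ℝ) ^ 2 := by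
              rcases Nat.eq_zero_or_pos d with h | h
              · simp [h]
              · have : (1 : ℝ) ≤ (d : ℝ) := by exact_mod_cast h
                nlinarith
            calc Real.sqrt d ≤ Real.sqrt ((d : ℝ) ^ 2) := Real.sqrt_le_sqrt h2
              _ = (d : ℝ) := Real.sqrt_sq (Nat.cast_nonneg d)
          nlinarith [hK, Nat.cast_nonneg (α := ℝ) d]
  refine ⟨v, hvm, hvnorm, fun a b hab => ?_⟩
  have hvint : ∀ c e : ℝ, IntervalIntegrable v volume c e := by
    intro c e
    rw [intervalIntegrable_iff]
    refine Integrable.mono' (g := fun _ => (d : ℝ) * K + 1)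
      (integrableOn_const measure_Ioc_lt_top.ne) hvm.aestronglyMeasurable.restrict
      (Eventually.of_forall (fun s => hvnorm s))
  refine PiLp.ext (fun i => ?_)
  have hproj := (EuclideanSpace.proj (𝕜 := ℝ) i).intervalIntegral_comp_comm (hvint a b)
  have hproj' : (∫ s in a..b, v s) i = ∫ s in a..b, v s i := by
    simpa using hproj.symm
  rw [hproj']
  have hcongr : ∫ s in a..b, v s i = ∫ s in a..b, ((ρ i s).toReal - K) := by
    refine intervalIntegral.integral_congr_ae ?_
    filter_upwards [hbd i] with s hs
    intro _
    rw [hvi, min_eq_left hs]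
  rw [hcongr]
  have hρint : IntegrableOn (fun s => (ρ i s).toReal) (Ioc a b) volume := by
    refine Integrable.mono' (g := fun _ => 2 * K)
      (integrableOn_const measure_Ioc_lt_top.ne)
      ((hρm i).ennreal_toReal).aestronglyMeasurable.restrict ?_
    filter_upwards [ae_restrict_of_ae (hbd i)] with s hs
    rw [Real.norm_eq_abs, abs_of_nonneg ENNReal.toReal_nonneg]
    refine le_trans (ENNReal.toReal_mono ENNReal.ofReal_ne_top hs) ?_
    rw [ENNReal.toReal_ofReal (by linarith)]
  have hsplit : ∫ s in a..b, ((ρ i s).toReal - K)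
      = (∫ s in a..b, (ρ i s).toReal) - ∫ s in a..b, (K : ℝ) := by
    apply intervalIntegral.integral_sub
    · rw [intervalIntegrable_iff, uIoc_of_le hab]; exact hρint
    · exact intervalIntegrable_const
  have hmain : ∫ s in a..b, (ρ i s).toReal = (f i) b - (f i) a := by
    rw [intervalIntegral.integral_of_le hab]
    rw [MeasureTheory.integral_toReal ((hρm i).aemeasurable.restrict) ?hlt]
    case hlt =>
      filter_upwards [ae_restrict_of_ae (hbd i)] with s hs
      exact lt_of_le_of_lt hs ENNReal.ofReal_lt_top
    rw [← withDensity_apply _ measurableSet_Ioc, hwd i, StieltjesFunction.measure_Ioc,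
      ENNReal.toReal_ofReal (sub_nonneg.2 ((f i).mono hab))]
  rw [hsplit, hmain, intervalIntegral.integral_const, smul_eq_mul]
  have : (f i) b - (f i) a = (x b i - x a i) + K * (b - a) := by simp only [hf]; ring
  rw [this]
  have hsub : (x b - x a) i = x b i - x a i := by simp
  rw [hsub]; ring


/-- A priori estimates for solutions of the differential inclusion. -/
lemma sol_facts {d : ℕ} {T L : ℝ} (hT : 0 < T) (hL : 0 < L)
    {F : ℝ → Euc d → Set (Euc d)}
    (hFne : ∀ t ∈ Icc (0:ℝ) T, ∀ x : Euc d, (F t x).Nonempty)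
    (hFcpt : ∀ t ∈ Icc (0:ℝ) T, ∀ x : Euc d, IsCompact (F t x))
    (hFlip : ∀ t ∈ Icc (0:ℝ) T, ∀ t' ∈ Icc (0:ℝ) T, ∀ x x' : Euc d,
      hausdorffDist (F t x) (F t' x') ≤ L * |t - t'| + L * ‖x - x'‖)
    {x₀ : Euc d} {C₀ R₀ : ℝ} (hC₀0 : 0 ≤ C₀) (hR₀0 : 0 ≤ R₀)
    (hC₀ : ∀ w ∈ F 0 x₀, ‖w‖ ≤ C₀)
    {τ : ℝ} (hτ0 : 0 < τ) (hτT : τ ≤ T)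
    {x v : ℝ → Euc d} (hInt : IntegrableOn v (Ioo (0:ℝ) τ))
    (hrep : ∀ t ∈ Icc (0:ℝ) τ, x t = x 0 + ∫ s in (0:ℝ)..t, v s)
    (hmem : ∀ᵐ s ∂(volume.restrict (Ioo (0:ℝ) τ)), v s ∈ F s (x s))
    (hx0 : ‖x 0 - x₀‖ ≤ R₀) :
    (∀ᵐ s ∂(volume.restrict (Ioo (0:ℝ) τ)),
        ‖v s‖ ≤ (C₀ + 1 + L*T + L*R₀) + L * gronwallBound 0 L (C₀ + 1 + L*T + L*R₀) T) ∧
    (∀ t' ∈ Icc (0:ℝ) τ, ∀ t ∈ Icc (0:ℝ) τ, t' ≤ t → x t - x t' = ∫ s in t'..t, v s) ∧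
    (∀ t' ∈ Icc (0:ℝ) τ, ∀ t ∈ Icc (0:ℝ) τ,
      ‖x t - x t'‖ ≤ ((C₀ + 1 + L*T + L*R₀) + L * gronwallBound 0 L (C₀ + 1 + L*T + L*R₀) T)
        * |t - t'|) := by
  set C₁ : ℝ := C₀ + 1 + L*T + L*R₀ with hC₁
  set R : ℝ := gronwallBound 0 L C₁ T with hRdef
  set K : ℝ := C₁ + L * R with hKdef
  have hC₁0 : 0 ≤ C₁ := by
    have : 0 ≤ L*T := by positivity
    have : 0 ≤ L*R₀ := by positivity
    simp only [hC₁]; linarith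
  have hgb : ∀ t : ℝ, gronwallBound 0 L C₁ t = C₁ / L * (Real.exp (L * t) - 1) := by
    intro t
    rw [gronwallBound_of_K_ne_0 hL.ne']
    ring
  have hgbmono : ∀ t ∈ Icc (0:ℝ) T, gronwallBound 0 L C₁ t ≤ R := by
    intro t ht
    rw [hRdef, hgb, hgb]
    have h1 : Real.exp (L * t) ≤ Real.exp (L * T) :=
      Real.exp_le_exp.2 (by nlinarith [ht.2, hL.le])
    have h2 : 0 ≤ C₁ / L := by positivity
    nlinarith
  have hR0 : 0 ≤ R := by
    rw [hRdef, hgb]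
    have h1 : 1 ≤ Real.exp (L * T) := Real.one_le_exp (by positivity)
    have h2 : 0 ≤ C₁ / L := by positivity
    nlinarith
  have hK0 : 0 ≤ K := by
    have : 0 ≤ L * R := by positivity
    simp only [hKdef]; linarith
  -- basic integrability
  have hIntIcc : IntegrableOn v (Icc (0:ℝ) τ) := by
    rwa [← integrableOn_Icc_iff_integrableOn_Ioo] at hInt
  have hII : ∀ t' ∈ Icc (0:ℝ) τ, ∀ t ∈ Icc (0:ℝ) τ, IntervalIntegrable v volume t' t := by
    intro t' ht' t ht
    rw [intervalIntegrable_iff]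
    refine hIntIcc.mono_set ?_
    rw [uIoc_eq_union]
    intro s hs
    rcases hs with hs | hs
    · exact ⟨le_trans ht'.1 hs.1.le, le_trans hs.2 ht.2⟩
    · exact ⟨le_trans ht.1 hs.1.le, le_trans hs.2 ht'.2⟩
  -- difference representation
  have hsub : ∀ t' ∈ Icc (0:ℝ) τ, ∀ t ∈ Icc (0:ℝ) τ, x t - x t' = ∫ s in t'..t, v s := by
    intro t' ht' t ht
    rw [hrep t ht, hrep t' ht']
    have h0 : (0:ℝ) ∈ Icc (0:ℝ) τ := ⟨le_refl _, hτ0.le⟩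
    rw [add_sub_add_left_eq_sub]
    exact (intervalIntegral.integral_interval_sub_left (hII 0 h0 t ht) (hII 0 h0 t' ht'))
  -- step 1 : a.e. bound by C₁ + L * ‖x s - x 0‖
  have step1 : ∀ᵐ s ∂(volume.restrict (Ioo (0:ℝ) τ)),
      ‖v s‖ ≤ C₁ + L * ‖x s - x 0‖ := by
    filter_upwards [hmem, ae_restrict_mem measurableSet_Ioo] with s hv hs
    have hsIcc : s ∈ Icc (0:ℝ) T := ⟨hs.1.le, le_trans hs.2.le hτT⟩
    have h0Icc : (0:ℝ) ∈ Icc (0:ℝ) T := ⟨le_refl _, hT.le⟩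
    have hne1 : (F s (x s)).Nonempty := hFne s hsIcc _
    have hne0 : (F 0 x₀).Nonempty := hFne 0 h0Icc x₀
    have hfin : EMetric.hausdorffEdist (F s (x s)) (F 0 x₀) ≠ ⊤ :=
      hausdorffEdist_ne_top_of_nonempty_of_bounded hne1 hne0
        (hFcpt s hsIcc _).isBounded (hFcpt 0 h0Icc _).isBounded
    have key : infDist (v s) (F 0 x₀) ≤ hausdorffDist (F s (x s)) (F 0 x₀) :=
      infDist_le_hausdorffDist_of_mem hv hfin
    have hdle : hausdorffDist (F s (x s)) (F 0 x₀) ≤ L * |s - 0| + L * ‖x s - x₀‖ :=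
      hFlip s hsIcc 0 h0Icc (x s) x₀
    have hlt : infDist (v s) (F 0 x₀) < L * |s - 0| + L * ‖x s - x₀‖ + 1 :=
      lt_of_le_of_lt (key.trans hdle) (by linarith)
    obtain ⟨w, hw, hdw⟩ := (infDist_lt_iff hne0).1 hlt
    have h1 : ‖v s‖ ≤ ‖w‖ + dist (v s) w := by
      rw [dist_eq_norm]
      calc ‖v s‖ = ‖w + (v s - w)‖ := by congr 1; abel
        _ ≤ ‖w‖ + ‖v s - w‖ := norm_add_le _ _
    have h2 : ‖x s - x₀‖ ≤ ‖x s - x 0‖ + ‖x 0 - x₀‖ := by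
      calc ‖x s - x₀‖ = ‖(x s - x 0) + (x 0 - x₀)‖ := by congr 1; abel
        _ ≤ _ := norm_add_le _ _
    have h3 : |s - 0| ≤ T := by
      rw [sub_zero, abs_of_nonneg hs.1.le]; exact le_trans hs.2.le hτT
    have h4 := hC₀ w hw
    have h5 : 0 ≤ ‖x s - x 0‖ := norm_nonneg _
    simp only [hC₁]
    nlinarith [hL.le, norm_nonneg (x s - x₀)]
  -- continuity of x on [0,τ]
  have hxcont : ContinuousOn x (Icc (0:ℝ) τ) := by
    have h1 : IntegrableOn v (uIcc (0:ℝ) τ) := by rwa [uIcc_of_le hτ0.le]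
    have h2 : ContinuousOn (fun t => x 0 + ∫ s in (0:ℝ)..t, v s) (Icc (0:ℝ) τ) := by
      have := (intervalIntegral.continuousOn_primitive_interval h1)
      rw [uIcc_of_le hτ0.le] at this
      exact continuousOn_const.add this
    exact h2.congr hrep
  -- the clamp function
  set cl : ℝ → ℝ := fun t => max 0 (min t τ) with hcl
  have hclmem : ∀ t, cl t ∈ Icc (0:ℝ) τ := by
    intro t
    constructor
    · exact le_max_left _ _
    · exact max_le hτ0.le (min_le_right _ _)
  have hclid : ∀ t ∈ Icc (0:ℝ) τ, cl t = t := by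
    intro t ht
    simp only [hcl]
    rw [min_eq_left ht.2, max_eq_right ht.1]
  have hclcont : Continuous cl := continuous_const.max (continuous_id.min continuous_const)
  set ub : ℝ → ℝ := fun s => C₁ + L * ‖x (cl s) - x 0‖ with hub
  have hubc : Continuous ub := by
    have : Continuous fun s => x (cl s) :=
      hxcont.comp_continuous hclcont hclmem
    exact continuous_const.add (continuous_const.mul ((this.sub continuous_const).norm))
  have hub0 : ∀ s, 0 ≤ ub s := by
    intro s
    have : 0 ≤ L * ‖x (cl s) - x 0‖ := by positivity
    simp only [hub]; linarith
  set W : ℝ → ℝ := fun t => ∫ s in (0:ℝ)..t, ub s with hW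
  have hW' : ∀ t : ℝ, HasDerivAt W (ub t) t := by
    intro t
    exact intervalIntegral.integral_hasDerivAt_right (hubc.intervalIntegrable _ _)
      hubc.stronglyMeasurable.stronglyMeasurableAtFilter hubc.continuousAt
  have hWc : Continuous W := continuous_iff_continuousAt.2 (fun t => (hW' t).continuousAt)
  have hule : ∀ t ∈ Icc (0:ℝ) τ, ‖x t - x 0‖ ≤ W t := by
    intro t ht
    have h0 : (0:ℝ) ∈ Icc (0:ℝ) τ := ⟨le_refl _, hτ0.le⟩
    rw [hsub 0 h0 t ht]
    have hae : ∀ᵐ s ∂volume.restrict (uIoc 0 t), ‖v s‖ ≤ ub s := by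
      rw [uIoc_of_le ht.1, ← Measure.restrict_congr_set Ioo_ae_eq_Ioc]
      refine ae_restrict_of_ae_restrict_of_subset (Ioo_subset_Ioo le_rfl ht.2) ?_
      filter_upwards [step1, ae_restrict_mem measurableSet_Ioo] with s h1 h2
      show ‖v s‖ ≤ C₁ + L * ‖x (cl s) - x 0‖
      rw [hclid s ⟨h2.1.le, h2.2.le⟩]
      exact h1
    have hb := intervalIntegral.norm_integral_le_abs_of_norm_le hae
      (hubc.intervalIntegrable _ _)
    have hWt0 : 0 ≤ W t := intervalIntegral.integral_nonneg ht.1 (fun s _ => hub0 s)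
    calc ‖∫ s in (0:ℝ)..t, v s‖ ≤ |∫ s in (0:ℝ)..t, ub s| := hb
      _ = W t := abs_of_nonneg hWt0
  have gron : ∀ t ∈ Icc (0:ℝ) τ, ‖W t‖ ≤ gronwallBound 0 L C₁ (t - 0) := by
    refine norm_le_gronwallBound_of_norm_deriv_right_le hWc.continuousOn
      (fun s _ => (hW' s).hasDerivWithinAt) ?_ ?_
    · have : W 0 = 0 := intervalIntegral.integral_same
      rw [this, norm_zero]
    · intro s hs
      have hsIcc : s ∈ Icc (0:ℝ) τ := ⟨hs.1, hs.2.le⟩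
      have h1 : ‖ub s‖ = C₁ + L * ‖x (cl s) - x 0‖ := abs_of_nonneg (hub0 s)
      rw [h1, hclid s hsIcc]
      have h2 : ‖x s - x 0‖ ≤ W s := hule s hsIcc
      have h3 : W s ≤ ‖W s‖ := le_abs_self _
      nlinarith [hL.le]
  have bnd : ∀ t ∈ Icc (0:ℝ) τ, ‖x t - x 0‖ ≤ R := by
    intro t ht
    have h1 := (hule t ht).trans ((le_abs_self _).trans (gron t ht))
    rw [sub_zero] at h1
    exact h1.trans (hgbmono t ⟨ht.1, ht.2.trans hτT⟩)
  have aeK : ∀ᵐ s ∂(volume.restrict (Ioo (0:ℝ) τ)), ‖v s‖ ≤ K := by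
    filter_upwards [step1, ae_restrict_mem measurableSet_Ioo] with s h1 h2
    have h3 : ‖x s - x 0‖ ≤ R := bnd s ⟨h2.1.le, h2.2.le⟩
    nlinarith [hL.le]
  have lip' : ∀ t' ∈ Icc (0:ℝ) τ, ∀ t ∈ Icc (0:ℝ) τ, t' ≤ t →
      ‖x t - x t'‖ ≤ K * (t - t') := by
    intro t' ht' t ht htt
    rw [hsub t' ht' t ht]
    have hae : ∀ᵐ s ∂volume.restrict (uIoc t' t), ‖v s‖ ≤ (fun _ => K) s := by
      rw [uIoc_of_le htt, ← Measure.restrict_congr_set Ioo_ae_eq_Ioc]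
      refine ae_restrict_of_ae_restrict_of_subset (Ioo_subset_Ioo ht'.1 ht.2) aeK
    have hb := intervalIntegral.norm_integral_le_abs_of_norm_le hae
      intervalIntegrable_const
    calc ‖∫ s in t'..t, v s‖ ≤ |∫ _s in t'..t, K| := hb
      _ = |(t - t') * K| := by rw [intervalIntegral.integral_const, smul_eq_mul]
      _ = K * (t - t') := by
          rw [abs_of_nonneg (by nlinarith), mul_comm]
  refine ⟨aeK, fun t' ht' t ht htt => hsub t' ht' t ht, ?_⟩
  intro t' ht' t ht
  rcases le_total t' t with h | h
  · rw [abs_of_nonneg (sub_nonneg.2 h)]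
    exact lip' t' ht' t ht h
  · rw [abs_of_nonpos (sub_nonpos.2 h), norm_sub_rev]
    have h2 := lip' t ht t' ht' h
    linarith

set_option maxHeartbeats 1000000 in
theorem statement_5
    (d : ℕ) (hd : 1 ≤ d) (T L : ℝ) (hT : 0 < T) (hL : 0 < L)
    (F : ℝ → Euc d → Set (Euc d))
    (hFne : ∀ t ∈ Icc (0:ℝ) T, ∀ x : Euc d, (F t x).Nonempty)
    (hFcvx : ∀ t ∈ Icc (0:ℝ) T, ∀ x : Euc d, Convex ℝ (F t x))
    (hFcpt : ∀ t ∈ Icc (0:ℝ) T, ∀ x : Euc d, IsCompact (F t x))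
    (hFlip : ∀ t ∈ Icc (0:ℝ) T, ∀ t' ∈ Icc (0:ℝ) T, ∀ x x' : Euc d,
      hausdorffDist (F t x) (F t' x') ≤ L * |t - t'| + L * ‖x - x'‖)
    (A : ℝ → Set (Euc d))
    (hAcl : ∀ t ∈ Icc (0:ℝ) T, IsClosed (A t))
    (hAusc : ∀ (ts : ℕ → ℝ) (t : ℝ) (xs : ℕ → Euc d) (xx : Euc d),
      (∀ n, ts n ∈ Icc (0:ℝ) T) → Tendsto ts atTop (nhds t) →
      (∀ n, xs n ∈ A (ts n)) → Tendsto xs atTop (nhds xx) → xx ∈ A t)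
    (X₀ : Set (Euc d)) (hX₀ne : X₀.Nonempty) (hX₀cpt : IsCompact X₀)
    (hcompat : ∃ τ₀, 0 < τ₀ ∧ τ₀ ≤ T ∧ (Sc F A X₀ τ₀).Nonempty)
     :
    0 < tauStar F A X₀ T ∧ tauStar F A X₀ T ≤ T ∧
      (Sc F A X₀ (tauStar F A X₀ T)).Nonempty := by
  classical
  obtain ⟨τ₀, hτ₀0, hτ₀T, hτ₀ne⟩ := hcompat
  set S : Set ℝ := {τ : ℝ | 0 < τ ∧ τ ≤ T ∧ (Sc F A X₀ τ).Nonempty} with hSdef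
  have hSne : S.Nonempty := ⟨τ₀, hτ₀0, hτ₀T, hτ₀ne⟩
  have hSbdd : BddAbove S := ⟨T, fun τ hτ => hτ.2.1⟩
  have htaueq : tauStar F A X₀ T = sSup S := rfl
  set b : ℝ := sSup S with hbdef
  have hbmem0 : τ₀ ≤ b := le_csSup hSbdd ⟨hτ₀0, hτ₀T, hτ₀ne⟩
  have hb0 : 0 < b := lt_of_lt_of_le hτ₀0 hbmem0
  have hbT : b ≤ T := csSup_le hSne (fun τ hτ => hτ.2.1)
  rw [htaueq]
  refine ⟨hb0, hbT, ?_⟩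
  -- choose a sequence of times increasing to b and corresponding solutions
  have hτseq : ∀ n : ℕ, ∃ τ, τ ∈ S ∧ b - 1/(n+1) < τ := by
    intro n
    have h1 : (0:ℝ) < 1/(n+1) := by positivity
    obtain ⟨τ, hτ, hlt⟩ := exists_lt_of_lt_csSup hSne (show b - 1/(n+1) < b by linarith)
    exact ⟨τ, hτ, hlt⟩
  choose τs hτsS hτslt using hτseq
  have hτsle : ∀ n, τs n ≤ b := fun n => le_csSup hSbdd (hτsS n)
  have hτs0 : ∀ n, 0 < τs n := fun n => (hτsS n).1
  have hτsT : ∀ n, τs n ≤ T := fun n => (hτsS n).2.1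
  have hτstend : Tendsto τs atTop (𝓝 b) := by
    have hlow : Tendsto (fun n : ℕ => b - 1/(n+1)) atTop (𝓝 b) := by
      have h1 := tendsto_one_div_add_atTop_nhds_zero_nat (𝕜 := ℝ)
      have h2 := (tendsto_const_nhds (x := b) (f := atTop (α := ℕ))).sub h1
      simpa using h2
    exact tendsto_of_tendsto_of_tendsto_of_le_of_le hlow tendsto_const_nhds
      (fun n => (hτslt n).le) hτsle
  choose xs hxsSc using fun n => (hτsS n).2.2
  have hx0mem : ∀ n, xs n 0 ∈ X₀ := fun n => (hxsSc n).1.1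
  choose vs hsol using fun n => (hxsSc n).1.2
  -- constants
  obtain ⟨x₀, hx₀⟩ := hX₀ne
  have h0Icc : (0:ℝ) ∈ Icc (0:ℝ) T := ⟨le_refl _, hT.le⟩
  obtain ⟨C₀', hC₀'⟩ := isBounded_iff_forall_norm_le.1 (hFcpt 0 h0Icc x₀).isBounded
  set C₀ : ℝ := max C₀' 0 with hC₀def
  have hC₀0 : 0 ≤ C₀ := le_max_right _ _
  have hC₀ : ∀ w ∈ F 0 x₀, ‖w‖ ≤ C₀ := fun w hw => (hC₀' w hw).trans (le_max_left _ _)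
  obtain ⟨R₀', hR₀'⟩ := isBounded_iff_forall_norm_le.1 hX₀cpt.isBounded
  set R₀ : ℝ := max (R₀' + ‖x₀‖) 0 with hR₀def
  have hR₀0 : 0 ≤ R₀ := le_max_right _ _
  have hR₀ : ∀ y ∈ X₀, ‖y - x₀‖ ≤ R₀ := by
    intro y hy
    refine le_trans (norm_sub_le _ _) (le_trans ?_ (le_max_left _ _))
    exact add_le_add_left (hR₀' y hy) _
  set C₁ : ℝ := C₀ + 1 + L*T + L*R₀ with hC₁def
  set K : ℝ := C₁ + L * gronwallBound 0 L C₁ T with hKdef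
  have hC₁0 : 0 ≤ C₁ := by
    have h1 : 0 ≤ L*T := by positivity
    have h2 : 0 ≤ L*R₀ := by positivity
    simp only [hC₁def]; linarith
  have hgbR : 0 ≤ gronwallBound 0 L C₁ T := by
    rw [gronwallBound_of_K_ne_0 hL.ne']
    have h1 : 1 ≤ Real.exp (L * T) := Real.one_le_exp (by positivity)
    have h2 : 0 ≤ C₁ / L := by positivity
    nlinarith
  have hK0 : 0 ≤ K := by
    have : 0 ≤ L * gronwallBound 0 L C₁ T := by positivity
    simp only [hKdef]; linarith
  -- solution facts for each n
  have hfacts := fun n => sol_facts hT hL hFne hFcpt hFlip hC₀0 hR₀0 hC₀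
    (hτs0 n) (hτsT n) (hsol n).1 (hsol n).2.1 (hsol n).2.2 (hR₀ _ (hx0mem n))
  have haeK : ∀ n, ∀ᵐ s ∂(volume.restrict (Ioo (0:ℝ) (τs n))), ‖vs n s‖ ≤ K :=
    fun n => (hfacts n).1
  have hsubn : ∀ n, ∀ t' ∈ Icc (0:ℝ) (τs n), ∀ t ∈ Icc (0:ℝ) (τs n), t' ≤ t →
      xs n t - xs n t' = ∫ s in t'..t, vs n s := fun n => (hfacts n).2.1
  have hlipn : ∀ n, ∀ t' ∈ Icc (0:ℝ) (τs n), ∀ t ∈ Icc (0:ℝ) (τs n),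
      ‖xs n t - xs n t'‖ ≤ K * |t - t'| := fun n => (hfacts n).2.2
  -- clamped solutions
  set cl : ℕ → ℝ → ℝ := fun n t => max 0 (min t (τs n)) with hcldef
  have hclmem : ∀ n t, cl n t ∈ Icc (0:ℝ) (τs n) :=
    fun n t => ⟨le_max_left _ _, max_le (hτs0 n).le (min_le_right _ _)⟩
  have hclid : ∀ n, ∀ t ∈ Icc (0:ℝ) (τs n), cl n t = t := by
    intro n t ht
    simp only [hcldef]
    rw [min_eq_left ht.2, max_eq_right ht.1]
  have hcllip : ∀ n t t', |cl n t - cl n t'| ≤ |t - t'| := by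
    intro n t t'
    have h1 : LipschitzWith 1 (cl n) :=
      ((LipschitzWith.id (α := ℝ)).min_const (τs n)).const_max 0
    have h2 := lipschitzWith_iff_dist_le_mul.1 h1 t t'
    rw [Real.dist_eq, Real.dist_eq] at h2
    simpa using h2
  set ys : ℕ → ℝ → Euc d := fun n t => xs n (cl n t) with hysdef
  have hyslip : ∀ n t t', ‖ys n t - ys n t'‖ ≤ K * |t - t'| := by
    intro n t t'
    refine le_trans (hlipn n _ (hclmem n t') _ (hclmem n t)) ?_
    have := hcllip n t t'
    nlinarith [abs_nonneg (t - t'), hK0]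
  have hys0 : ∀ n, ys n 0 = xs n 0 := by
    intro n
    simp only [hysdef]
    rw [hclid n 0 ⟨le_refl _, (hτs0 n).le⟩]
  set B : ℝ := ‖x₀‖ + R₀ + K * T with hBdef
  have hysbnd : ∀ n t, ‖ys n t‖ ≤ B := by
    intro n t
    have h1 : ‖ys n t - ys n 0‖ ≤ K * T := by
      refine le_trans (hlipn n _ (hclmem n 0) _ (hclmem n t)) ?_
      have h2 : |cl n t - cl n 0| ≤ T := by
        have h3 := hclmem n t
        have h4 := hclmem n 0
        rw [abs_le]
        constructor
        · have := (hτsT n); have := h3.1; have := h4.2; linarith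
        · have := (hτsT n); have := h3.2; have := h4.1; linarith
      nlinarith [hK0, abs_nonneg (cl n t - cl n 0)]
    have h2 : ‖ys n 0‖ ≤ ‖x₀‖ + R₀ := by
      rw [hys0 n]
      have := hR₀ _ (hx0mem n)
      calc ‖xs n 0‖ = ‖x₀ + (xs n 0 - x₀)‖ := by congr 1; abel
        _ ≤ ‖x₀‖ + ‖xs n 0 - x₀‖ := norm_add_le _ _
        _ ≤ ‖x₀‖ + R₀ := by linarith
    calc ‖ys n t‖ = ‖ys n 0 + (ys n t - ys n 0)‖ := by congr 1; abel
      _ ≤ ‖ys n 0‖ + ‖ys n t - ys n 0‖ := norm_add_le _ _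
      _ ≤ B := by simp only [hBdef]; linarith
  -- ultrafilter limit
  set U : Ultrafilter ℕ := Ultrafilter.of atTop with hUdef
  have hUle : (U : Filter ℕ) ≤ atTop := Ultrafilter.of_le atTop
  have hxlim : ∀ t : ℝ, ∃ p : Euc d, Tendsto (fun n => ys n t) U (𝓝 p) := by
    intro t
    have h1 : closedBall (0 : Euc d) B ∈ map (fun n => ys n t) (U : Filter ℕ) := by
      refine mem_map.2 (univ_mem' ?_)
      intro n
      show (fun m => ys m t) n ∈ closedBall (0 : Euc d) B
      simp only [mem_closedBall, dist_zero_right]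
      exact hysbnd n t
    obtain ⟨p, _, hple⟩ := (isCompact_closedBall (0 : Euc d) B).ultrafilter_le_nhds
      (U.map (fun n => ys n t)) (le_principal_iff.2 h1)
    exact ⟨p, hple⟩
  choose xx hxxlim using hxlim
  have hxxlip : ∀ t t' : ℝ, ‖xx t - xx t'‖ ≤ K * |t - t'| := by
    intro t t'
    have h1 : Tendsto (fun n => ‖ys n t - ys n t'‖) U (𝓝 ‖xx t - xx t'‖) :=
      ((hxxlim t).sub (hxxlim t')).norm
    exact le_of_tendsto h1 (Eventually.of_forall (fun n => hyslip n t t'))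
  have hxx0 : xx 0 ∈ X₀ := by
    refine hX₀cpt.isClosed.mem_of_tendsto (hxxlim 0) (Eventually.of_forall (fun n => ?_))
    rw [hys0 n]; exact hx0mem n
  -- constraint satisfaction
  have hxxA : ∀ t ∈ Icc (0:ℝ) b, xx t ∈ A t := by
    intro t ht
    have hcl : (𝓝 (xx t) ⊓ map (fun n => ys n t) atTop).NeBot := by
      refine Filter.NeBot.mono ?_ (le_inf (hxxlim t) (map_mono hUle))
      exact (U.map (fun n => ys n t)).neBot
    obtain ⟨θ, hθmono, hθtend⟩ := Filter.subseq_tendsto_of_neBot hcl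
    refine hAusc (fun k => cl (θ k) t) t (fun k => ys (θ k) t) (xx t) ?_ ?_ ?_ hθtend
    · intro k
      have h1 := hclmem (θ k) t
      exact ⟨h1.1, h1.2.trans (hτsT _)⟩
    · have h1 : Tendsto (fun k => τs (θ k)) atTop (𝓝 b) :=
        hτstend.comp hθmono.tendsto_atTop
      have h2 : Continuous fun r : ℝ => max 0 (min t r) :=
        continuous_const.max (continuous_const.min continuous_id)
      have h3 := (h2.continuousAt (x := b)).tendsto.comp h1
      have h4 : max 0 (min t b) = t := by
        rw [min_eq_left ht.2, max_eq_right ht.1]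
      rw [h4] at h3
      exact h3
    · intro k
      exact (hxsSc (θ k)).2 _ (hclmem (θ k) t)
  -- density of the limit
  obtain ⟨v, hvm, hvbnd, hvrep⟩ := lipschitz_exists_density K hK0 xx hxxlip
  have hvint : ∀ s : Set ℝ, volume s < ⊤ → IntegrableOn v s := by
    intro s hs
    exact Integrable.mono' (integrableOn_const hs.ne)
      hvm.aestronglyMeasurable.restrict (Eventually.of_forall hvbnd)
  have hxxrep : ∀ t ∈ Icc (0:ℝ) b, xx t = xx 0 + ∫ s in (0:ℝ)..t, v s := by
    intro t ht
    have := hvrep 0 t ht.1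
    rw [← this]; abel
  -- a.e. membership of the density in F
  have haemem : ∀ᵐ s ∂(volume.restrict (Ioo (0:ℝ) b)), v s ∈ F s (xx s) := by
    have hloc : LocallyIntegrable v volume := by
      intro t
      exact ⟨closedBall t 1, closedBall_mem_nhds t one_pos,
        hvint _ (by rw [Real.volume_closedBall]; exact ENNReal.ofReal_lt_top)⟩
    have hLeb := IsUnifLocDoublingMeasure.ae_tendsto_average (μ := (volume : Measure ℝ))
      hloc 1
    rw [ae_restrict_iff' measurableSet_Ioo]
    filter_upwards [hLeb] with s hs hsIoo
    have hsT : s ∈ Icc (0:ℝ) T := ⟨hsIoo.1.le, (hsIoo.2.trans_le hbT).le⟩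
    set G : Set (Euc d) := F s (xx s) with hGdef
    have hGne : G.Nonempty := hFne s hsT _
    have hGcvx : Convex ℝ G := hFcvx s hsT _
    have hGcpt : IsCompact G := hFcpt s hsT _
    have havg : Tendsto (fun r => ⨍ y in closedBall s r, v y) (𝓝[>] (0:ℝ)) (𝓝 (v s)) := by
      refine hs (fun _ => s) id tendsto_id ?_
      refine eventually_mem_nhdsWithin.mono (fun r hr => ?_)
      refine mem_closedBall_self ?_
      have := mem_Ioi.1 hr
      simp only [id_eq]
      linarith
    set r₀ : ℝ := min s ((b - s)/2) with hr₀def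
    have hr₀pos : 0 < r₀ := lt_min hsIoo.1 (by linarith [hsIoo.2])
    have claim : ∀ r ∈ Ioo (0:ℝ) r₀,
        infDist (⨍ y in closedBall s r, v y) G ≤ L * (1 + K) * r := by
      intro r hr
      have hr0 : 0 < r := hr.1
      have hrs : r < s := lt_of_lt_of_le hr.2 (min_le_left _ _)
      have hrb : s + r < b := by
        have := lt_of_lt_of_le hr.2 (min_le_right _ _)
        linarith
      have h1 : s - r ≤ s + r := by linarith
      have hball : closedBall s r = Icc (s - r) (s + r) := Real.closedBall_eq_Icc
      have hvol : volume (closedBall s r) = ENNReal.ofReal (2*r) := Real.volume_closedBall s r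
      have hvolne : volume (closedBall s r) ≠ 0 := by
        rw [hvol]
        exact (ENNReal.ofReal_pos.2 (by linarith)).ne'
      have hvolnetop : volume (closedBall s r) ≠ ⊤ := by
        rw [hvol]; exact ENNReal.ofReal_ne_top
      have havgv : ⨍ y in closedBall s r, v y = (2*r)⁻¹ • (xx (s+r) - xx (s-r)) := by
        rw [setAverage_eq, measureReal_def, hvol, ENNReal.toReal_ofReal (by linarith), hball,
          integral_Icc_eq_integral_Ioc, ← intervalIntegral.integral_of_le h1,
          ← hvrep (s-r) (s+r) h1]
      have hevn : ∀ᶠ n in (U : Filter ℕ), s + r < τs n :=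
        (hτstend.eventually (eventually_gt_nhds hrb)).filter_mono hUle
      have hquot : ∀ n, s + r < τs n →
          infDist ((2*r)⁻¹ • (ys n (s+r) - ys n (s-r))) G
            ≤ L*r + L*(K*r + ‖ys n s - xx s‖) := by
        intro n hn
        have hsubset : closedBall s r ⊆ Ioo 0 (τs n) := by
          rw [hball]
          intro u hu
          exact ⟨by linarith [hu.1], by linarith [hu.2]⟩
        set c : ℝ := L*r + L*(K*r + ‖ys n s - xx s‖) with hcdef
        have hc0 : 0 ≤ c := by
          have h2 := norm_nonneg (ys n s - xx s)
          have h3 : 0 ≤ K * r := by nlinarith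
          simp only [hcdef]
          nlinarith [hL.le]
        have haemem2 : ∀ᵐ u ∂volume.restrict (closedBall s r),
            vs n u ∈ cthickening c G := by
          filter_upwards [ae_restrict_of_ae_restrict_of_subset hsubset ((hsol n).2.2),
            ae_restrict_mem measurableSet_closedBall] with u hu1 hu2
          have huIoo := hsubset hu2
          have huIcc : u ∈ Icc (0:ℝ) (τs n) := ⟨huIoo.1.le, huIoo.2.le⟩
          have huT : u ∈ Icc (0:ℝ) T := ⟨huIcc.1, huIcc.2.trans (hτsT n)⟩
          have hfin : EMetric.hausdorffEdist (F u (xs n u)) G ≠ ⊤ :=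
            hausdorffEdist_ne_top_of_nonempty_of_bounded (hFne u huT _) hGne
              (hFcpt u huT _).isBounded hGcpt.isBounded
          have key : infDist (vs n u) G ≤ hausdorffDist (F u (xs n u)) G :=
            infDist_le_hausdorffDist_of_mem hu1 hfin
          have hdle : hausdorffDist (F u (xs n u)) G ≤ L * |u - s| + L * ‖xs n u - xx s‖ :=
            hFlip u huT s hsT _ _
          have h3 : |u - s| ≤ r := by
            rw [hball] at hu2
            rw [abs_le]
            constructor
            · linarith [hu2.1]
            · linarith [hu2.2]
          have h4 : ‖xs n u - xx s‖ ≤ K * r + ‖ys n s - xx s‖ := by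
            have h5 : xs n u = ys n u := by
              simp only [hysdef]
              rw [hclid n u huIcc]
            calc ‖xs n u - xx s‖ = ‖(ys n u - ys n s) + (ys n s - xx s)‖ := by
                  rw [h5]; congr 1; abel
              _ ≤ ‖ys n u - ys n s‖ + ‖ys n s - xx s‖ := norm_add_le _ _
              _ ≤ K * r + ‖ys n s - xx s‖ := by
                  have h6 := hyslip n u s
                  have h7 : K * |u - s| ≤ K * r := mul_le_mul_of_nonneg_left h3 hK0
                  linarith
          have hid : infDist (vs n u) G ≤ c := by
            refine key.trans (hdle.trans ?_)
            have h8 := mul_le_mul_of_nonneg_left h3 hL.le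
            have h9 := mul_le_mul_of_nonneg_left h4 hL.le
            simp only [hcdef]
            nlinarith [hL.le]
          rw [mem_cthickening_iff]
          exact (ENNReal.le_ofReal_iff_toReal_le (Metric.infEdist_ne_top hGne) hc0).2 hid
        have hIntn : IntegrableOn (vs n) (closedBall s r) :=
          ((hsol n).1).mono_set hsubset
        have hmem := (hGcvx.cthickening c).set_average_mem isClosed_cthickening
          hvolne hvolnetop haemem2 hIntn
        have havgn : ⨍ u in closedBall s r, vs n u
            = (2*r)⁻¹ • (ys n (s+r) - ys n (s-r)) := by
          have hmem1 : s - r ∈ Icc (0:ℝ) (τs n) := ⟨by linarith, by linarith⟩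
          have hmem2 : s + r ∈ Icc (0:ℝ) (τs n) := ⟨by linarith, hn.le⟩
          have hy1 : ys n (s+r) = xs n (s+r) := by
            simp only [hysdef]; rw [hclid n _ hmem2]
          have hy2 : ys n (s-r) = xs n (s-r) := by
            simp only [hysdef]; rw [hclid n _ hmem1]
          rw [setAverage_eq, measureReal_def, hvol, ENNReal.toReal_ofReal (by linarith), hball,
            integral_Icc_eq_integral_Ioc, ← intervalIntegral.integral_of_le h1,
            ← hsubn n (s-r) hmem1 (s+r) hmem2 h1, hy1, hy2]
        rw [havgn] at hmem
        rw [mem_cthickening_iff] at hmem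
        have h10 := ENNReal.toReal_mono ENNReal.ofReal_ne_top hmem
        rw [ENNReal.toReal_ofReal hc0] at h10
        exact h10
      have hterm1 : Tendsto (fun n => infDist ((2*r)⁻¹ • (ys n (s+r) - ys n (s-r))) G)
          (U : Filter ℕ) (𝓝 (infDist ((2*r)⁻¹ • (xx (s+r) - xx (s-r))) G)) :=
        (continuous_infDist_pt G).continuousAt.tendsto.comp
          (((hxxlim (s+r)).sub (hxxlim (s-r))).const_smul ((2*r)⁻¹))
      have hnrm : Tendsto (fun n => ‖ys n s - xx s‖) (U : Filter ℕ) (𝓝 0) :=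
        tendsto_iff_norm_sub_tendsto_zero.1 (hxxlim s)
      have hterm2 : Tendsto (fun n => L*r + L*(K*r + ‖ys n s - xx s‖)) (U : Filter ℕ)
          (𝓝 (L*r + L*(K*r + 0))) :=
        tendsto_const_nhds.add ((tendsto_const_nhds.add hnrm).const_mul L)
      have hfin2 := le_of_tendsto_of_tendsto hterm1 hterm2 (hevn.mono hquot)
      rw [havgv]
      refine hfin2.trans (le_of_eq ?_)
      ring
    have hf1 : Tendsto (fun r => infDist (⨍ y in closedBall s r, v y) G) (𝓝[>] (0:ℝ))
        (𝓝 (infDist (v s) G)) :=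
      (continuous_infDist_pt G).continuousAt.tendsto.comp havg
    have hf2 : Tendsto (fun r : ℝ => L * (1 + K) * r) (𝓝[>] (0:ℝ)) (𝓝 0) := by
      have h1 : Tendsto (fun r : ℝ => L * (1+K) * r) (𝓝 (0:ℝ)) (𝓝 (L * (1+K) * 0)) :=
        (continuous_const.mul continuous_id).tendsto 0
      rw [mul_zero] at h1
      exact tendsto_nhdsWithin_of_tendsto_nhds h1
    have hle0 : infDist (v s) G ≤ 0 := by
      refine le_of_tendsto_of_tendsto hf1 hf2 ?_
      filter_upwards [Ioo_mem_nhdsGT_of_mem (⟨le_refl (0:ℝ), hr₀pos⟩ : (0:ℝ) ∈ Ico 0 r₀)]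
        with r hr
      exact claim r hr
    have hzero : infDist (v s) G = 0 := le_antisymm hle0 infDist_nonneg
    exact (hGcpt.isClosed.mem_iff_infDist_zero hGne).2 hzero
  -- assemble the solution
  refine ⟨xx, ⟨hxx0, v, ?_, hxxrep, haemem⟩, hxxA⟩
  exact hvint _ measure_Ioo_lt_top
end
end

section
/- For every τ ∈ (0,T], every x ∈ S^c(τ) and every integer N ≥ 1, there exists a sequence (y_n)_{n=0}^{⌊τ/h_N⌋} ∈ S^{c,#}_N(⌊τ/h_N⌋, β_N^#, δ_N) with ‖x(t_{N,n}) − y_n‖ ≤ δ_N for all 0 ≤ n ≤ ⌊τ/h_N⌋. -/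
open MeasureTheory Metric Set Filter
open scoped RealInnerProductSpace
open scoped Pointwise

noncomputable section

lemma my_gronwall (f : ℝ → ℝ) (τ c L : ℝ) (hτ : 0 ≤ τ) (hL : 0 ≤ L)
    (hmono : MonotoneOn f (Icc 0 τ))
    (hint : IntegrableOn f (Icc 0 τ))
    (hle : ∀ t ∈ Icc (0:ℝ) τ, f t ≤ c + ∫ s in (0:ℝ)..t, L * f s) :
    ∀ t ∈ Icc (0:ℝ) τ, f t ≤ c * Real.exp (L * t) := by
  set B := f τ with hB
  have hfB : ∀ t ∈ Icc (0:ℝ) τ, f t ≤ B := fun t ht =>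
    hmono ht (right_mem_Icc.2 hτ) ht.2
  have key : ∀ (k : ℕ) (t : ℝ),
      (∫ s in (0:ℝ)..t, L * ((L*s)^k / (k.factorial : ℝ)))
        = (L*t)^(k+1) / ((k+1).factorial : ℝ) := by
    intro k t
    have h1 : ∀ s : ℝ, L * ((L*s)^k / (k.factorial : ℝ))
        = (L^(k+1) / (k.factorial : ℝ)) * s^k := by
      intro s; rw [mul_pow]; ring
    simp_rw [h1]
    rw [intervalIntegral.integral_const_mul, integral_pow]
    have hk : ((k.factorial : ℝ)) ≠ 0 := Nat.cast_ne_zero.2 k.factorial_ne_zero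
    have hk1 : ((k:ℝ) + 1) ≠ 0 := by positivity
    have h2 : (((k+1).factorial : ℝ)) = ((k:ℝ)+1) * (k.factorial : ℝ) := by
      rw [Nat.factorial_succ]; push_cast; ring
    rw [h2, mul_pow, zero_pow (Nat.succ_ne_zero k), sub_zero]
    field_simp
  have main : ∀ n : ℕ, ∀ t ∈ Icc (0:ℝ) τ,
      f t ≤ c * ∑ k ∈ Finset.range n, (L*t)^k / (k.factorial : ℝ)
            + B * ((L*t)^n / (n.factorial : ℝ)) := by
    intro n
    induction n with
    | zero => intro t ht; simpa using hfB t ht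
    | succ n ih =>
      intro t ht
      have hfi : IntervalIntegrable f volume 0 t := by
        rw [intervalIntegrable_iff, uIoc_of_le ht.1]
        exact hint.mono_set ((Ioc_subset_Icc_self).trans (Icc_subset_Icc le_rfl ht.2))
      have h2 : (∫ s in (0:ℝ)..t, L * f s) ≤ ∫ s in (0:ℝ)..t,
          ((∑ k ∈ Finset.range n, c * (L * ((L*s)^k / (k.factorial : ℝ))))
            + B * (L * ((L*s)^n / (n.factorial : ℝ)))) := by
        apply intervalIntegral.integral_mono_on ht.1 (hfi.const_mul L)
          (Continuous.intervalIntegrable (by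
            apply Continuous.add
            · exact continuous_finset_sum _ (fun k _ => by fun_prop)
            · fun_prop) _ _)
        intro s hs
        exact (mul_le_mul_of_nonneg_left (ih s ⟨hs.1, hs.2.trans ht.2⟩) hL).trans_eq
          (by rw [mul_add, Finset.mul_sum, Finset.mul_sum]
              congr 1
              · exact Finset.sum_congr rfl fun k _ => by ring
              · ring)
      have hA : ∀ k : ℕ, (∫ s in (0:ℝ)..t, c * (L * ((L*s)^k / (k.factorial : ℝ))))
          = c * ((L*t)^(k+1) / ((k+1).factorial : ℝ)) := fun k => by
        rw [intervalIntegral.integral_const_mul, key]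
      have hBB : (∫ s in (0:ℝ)..t, B * (L * ((L*s)^n / (n.factorial : ℝ))))
          = B * ((L*t)^(n+1) / ((n+1).factorial : ℝ)) := by
        rw [intervalIntegral.integral_const_mul, key]
      have h3 : (∫ s in (0:ℝ)..t,
          ((∑ k ∈ Finset.range n, c * (L * ((L*s)^k / (k.factorial : ℝ))))
            + B * (L * ((L*s)^n / (n.factorial : ℝ)))))
          = c * (∑ k ∈ Finset.range n, (L*t)^(k+1) / ((k+1).factorial : ℝ))
            + B * ((L*t)^(n+1) / ((n+1).factorial : ℝ)) := by
        rw [intervalIntegral.integral_add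
            (Continuous.intervalIntegrable (continuous_finset_sum _ (fun k _ => by fun_prop)) _ _)
            (Continuous.intervalIntegrable (by fun_prop) _ _),
          intervalIntegral.integral_finset_sum
            (fun k _ => Continuous.intervalIntegrable (by fun_prop) _ _), hBB]
        rw [Finset.mul_sum]
        congr 1
        exact Finset.sum_congr rfl fun k _ => hA k
      have h5 : c * ∑ k ∈ Finset.range (n+1), (L*t)^k / (k.factorial : ℝ)
          = c + c * ∑ k ∈ Finset.range n, (L*t)^(k+1) / ((k+1).factorial : ℝ) := by
        rw [Finset.sum_range_succ']
        simp [mul_add]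
        ring
      rw [h5]
      linarith [hle t ht, h2, h3]
  intro t ht
  have hsum : HasSum (fun k : ℕ => (L*t)^k / (k.factorial : ℝ)) (Real.exp (L*t)) := by
    rw [Real.exp_eq_exp_ℝ]
    exact NormedSpace.expSeries_div_hasSum_exp (L*t)
  have h1 : Tendsto (fun n : ℕ => c * ∑ k ∈ Finset.range n, (L*t)^k / (k.factorial : ℝ)
      + B * ((L*t)^n / (n.factorial : ℝ))) atTop (nhds (c * Real.exp (L*t) + B * 0)) := by
    exact ((hsum.tendsto_sum_nat).const_mul c).add
      ((hsum.summable.tendsto_atTop_zero).const_mul B)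
  have := ge_of_tendsto' h1 (fun n => main n t ht)
  simpa using this


theorem statement_9
    (d : ℕ) (hd : 1 ≤ d) (T L : ℝ) (hT : 0 < T) (hL : 0 < L)
    (F : ℝ → Euc d → Set (Euc d))
    (hFne : ∀ t ∈ Icc (0:ℝ) T, ∀ x : Euc d, (F t x).Nonempty)
    (hFcvx : ∀ t ∈ Icc (0:ℝ) T, ∀ x : Euc d, Convex ℝ (F t x))
    (hFcpt : ∀ t ∈ Icc (0:ℝ) T, ∀ x : Euc d, IsCompact (F t x))
    (hFlip : ∀ t ∈ Icc (0:ℝ) T, ∀ t' ∈ Icc (0:ℝ) T, ∀ x x' : Euc d,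
      hausdorffDist (F t x) (F t' x') ≤ L * |t - t'| + L * ‖x - x'‖)
    (A : ℝ → Set (Euc d))
    (hAcl : ∀ t ∈ Icc (0:ℝ) T, IsClosed (A t))
    (hAusc : ∀ (ts : ℕ → ℝ) (t : ℝ) (xs : ℕ → Euc d) (xx : Euc d),
      (∀ n, ts n ∈ Icc (0:ℝ) T) → Tendsto ts atTop (nhds t) →
      (∀ n, xs n ∈ A (ts n)) → Tendsto xs atTop (nhds xx) → xx ∈ A t)
    (X₀ : Set (Euc d)) (hX₀ne : X₀.Nonempty) (hX₀cpt : IsCompact X₀)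
    (δseq : ℕ → ℝ) (hδpos : ∀ N, 1 ≤ N → 0 < δseq N)
    (hδ : Tendsto (fun N : ℕ => δseq N / (T / N)) atTop (nhds 0))
    (Δ : ℕ → Set (Euc d))
    (hΔ : ∀ N, 1 ≤ N → ∀ x : Euc d, ∃ y ∈ Δ N, ‖x - y‖ ≤ δseq N)
    (R P : ℝ) (hR : 0 < R) (hP : 0 < P)
    (hPbd : ∀ t ∈ Icc (0:ℝ) T, ∀ y : Euc d, infDist y X₀ ≤ R →
      ∀ v ∈ F t y, ‖v‖ ≤ P)
    (hR1 : (Real.exp (L * T) - 1) * (Mconst F X₀ + 1) / L ≤ R)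
    (hR2 : Real.exp (L * T) *
      (sSup {r : ℝ | ∃ N, 1 ≤ N ∧ r = δseq N} + (P + 1) * T +
        (2 + L * T) * sSup {r : ℝ | ∃ N, 1 ≤ N ∧ r = δseq N / (T / N)} / L +
        Mconst F X₀ / L + 1) ≤ R)
     :
    ∀ τ : ℝ, 0 < τ → τ ≤ T → ∀ x ∈ Sc F A X₀ τ, ∀ N : ℕ, 1 ≤ N →
      ∃ y : ℕ → Euc d,
        (y ∈ ScN F A X₀ T N ⌊τ / (T / N)⌋₊
            (L * (P + 1) * (T / N) ^ 2 + (2 + L * (T / N)) * δseq N) (δseq N) ∧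
          ∀ n : ℕ, n ≤ ⌊τ / (T / N)⌋₊ → y n ∈ Δ N) ∧
        ∀ n : ℕ, n ≤ ⌊τ / (T / N)⌋₊ →
          ‖x ((n : ℝ) * (T / N)) - y n‖ ≤ δseq N := by
  intro τ hτ0 hττ x hx N hN
  obtain ⟨⟨hx0, v, hvIoo, hxeq, hvF⟩, hxA⟩ := hx
  have hNpos : (0:ℝ) < N := by exact_mod_cast Nat.lt_of_lt_of_le Nat.zero_lt_one hN
  set h : ℝ := T / N with hh
  have hhpos : 0 < h := div_pos hT hNpos
  set ν := ⌊τ / h⌋₊ with hν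
  have hνh : (ν : ℝ) * h ≤ τ := by
    rw [← le_div_iff₀ hhpos]
    exact Nat.floor_le (by positivity)
  set δ := δseq N with hδN
  have hδ0 : 0 < δ := hδpos N hN
  choose yfun hyΔ hyδ using hΔ N hN
  set y : ℕ → Euc d := fun n => yfun (x ((n:ℝ) * h)) with hy
  have h0T : (0:ℝ) ∈ Icc (0:ℝ) T := left_mem_Icc.2 hT.le
  -- integrability facts
  have hvIcc : IntegrableOn v (Icc 0 τ) := by
    rw [IntegrableOn, ← Measure.restrict_congr_set Ioo_ae_eq_Icc]; exact hvIoo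
  have hvFIcc : ∀ᵐ s ∂(volume.restrict (Icc (0:ℝ) τ)), v s ∈ F s (x s) := by
    rw [← Measure.restrict_congr_set Ioo_ae_eq_Icc]; exact hvF
  have hIvI : ∀ a b : ℝ, 0 ≤ a → a ≤ b → b ≤ τ → IntervalIntegrable v volume a b := by
    intro a b ha hab hbτ
    rw [intervalIntegrable_iff, uIoc_of_le hab]
    exact hvIcc.mono_set ((Ioc_subset_Icc_self).trans (Icc_subset_Icc ha hbτ))
  have hIvN : ∀ a b : ℝ, 0 ≤ a → a ≤ b → b ≤ τ →
      IntervalIntegrable (fun s => ‖v s‖) volume a b :=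
    fun a b ha hab hbτ => (hIvI a b ha hab hbτ).norm
  have hxd : ∀ a b : ℝ, 0 ≤ a → a ≤ b → b ≤ τ → x b - x a = ∫ s in a..b, v s := by
    intro a b ha hab hbτ
    have h1 := hxeq a ⟨ha, hab.trans hbτ⟩
    have h2 := hxeq b ⟨ha.trans hab, hbτ⟩
    have h3 := intervalIntegral.integral_add_adjacent_intervals
      (hIvI 0 a le_rfl ha (hab.trans hbτ)) (hIvI a b ha hab hbτ)
    rw [h1, h2, ← h3]; abel
  set g : ℝ → ℝ := fun t => ∫ s in (0:ℝ)..t, ‖v s‖ with hg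
  have hgd : ∀ a b : ℝ, 0 ≤ a → a ≤ b → b ≤ τ → g b - g a = ∫ s in a..b, ‖v s‖ := by
    intro a b ha hab hbτ
    have h3 := intervalIntegral.integral_add_adjacent_intervals
      (hIvN 0 a le_rfl ha (hab.trans hbτ)) (hIvN a b ha hab hbτ)
    simp only [hg]; rw [← h3]; ring
  have hgmono : MonotoneOn g (Icc (0:ℝ) τ) := by
    intro a ha b hb hab
    have h1 := hgd a b ha.1 hab hb.2
    have hnn : 0 ≤ ∫ s in a..b, ‖v s‖ :=
      intervalIntegral.integral_nonneg hab (fun s _ => norm_nonneg _)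
    linarith
  have hxag : ∀ s ∈ Icc (0:ℝ) τ, ‖x s - x 0‖ ≤ g s := by
    intro s hs
    rw [hxd 0 s le_rfl hs.1 hs.2]
    exact intervalIntegral.norm_integral_le_integral_norm hs.1
  -- the constant M
  set M := Mconst F X₀ with hM
  have hMbdd : ∀ r ∈ {r : ℝ | ∃ x ∈ X₀, ∃ v ∈ F 0 x, r = ‖v‖}, r ≤ P := by
    rintro r ⟨x', hx', v', hv', rfl⟩
    exact hPbd 0 h0T x' (by rw [infDist_zero_of_mem hx']; exact hR.le) v' hv'
  have hMle : ∀ x' ∈ X₀, ∀ w ∈ F 0 x', ‖w‖ ≤ M :=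
    fun x' hx' w hw => le_csSup ⟨P, hMbdd⟩ ⟨x', hx', w, hw, rfl⟩
  have hM0 : 0 ≤ M := by
    obtain ⟨x', hx'⟩ := hX₀ne
    obtain ⟨w, hw⟩ := hFne 0 h0T x'
    exact (norm_nonneg w).trans (hMle x' hx' w hw)
  -- a.e. bound on ‖v‖ in terms of g
  have haeM : ∀ᵐ s ∂(volume.restrict (Icc (0:ℝ) τ)), ‖v s‖ ≤ M + L * s + L * g s := by
    filter_upwards [hvFIcc, ae_restrict_mem measurableSet_Icc] with s hsv hs
    have hsT : s ∈ Icc (0:ℝ) T := ⟨hs.1, hs.2.trans hττ⟩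
    have hED : EMetric.hausdorffEdist (F s (x s)) (F 0 (x 0)) ≠ ⊤ :=
      hausdorffEdist_ne_top_of_nonempty_of_bounded (hFne s hsT (x s))
        (hFne 0 h0T (x 0)) (hFcpt s hsT (x s)).isBounded
        (hFcpt 0 h0T (x 0)).isBounded
    obtain ⟨w', hw', hdw'⟩ := (hFcpt 0 h0T (x 0)).exists_infDist_eq_dist
      (hFne 0 h0T (x 0)) (v s)
    have h1 : dist (v s) w' ≤ L * |s - 0| + L * ‖x s - x 0‖ := by
      rw [← hdw']
      exact (infDist_le_hausdorffDist_of_mem hsv hED).trans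
        (hFlip s hsT 0 h0T (x s) (x 0))
    have h2 : ‖w'‖ ≤ M := hMle (x 0) hx0 w' hw'
    have h3 : ‖x s - x 0‖ ≤ g s := hxag s hs
    have h4 : ‖v s‖ ≤ ‖w'‖ + dist (v s) w' := by
      rw [dist_eq_norm]
      simpa using norm_add_le w' (v s - w')
    rw [sub_zero, abs_of_nonneg hs.1] at h1
    have h5 : L * ‖x s - x 0‖ ≤ L * g s := mul_le_mul_of_nonneg_left h3 hL.le
    linarith
  -- Gronwall
  set c : ℝ := (M + 1) / L with hc
  have hc0 : 0 ≤ c := by positivity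
  set f : ℝ → ℝ := fun t => t + g t + c with hf
  have hfmono : MonotoneOn f (Icc (0:ℝ) τ) := by
    intro a ha b hb hab
    have := hgmono ha hb hab
    simp only [hf]; linarith
  have hfint : IntegrableOn f (Icc (0:ℝ) τ) :=
    hfmono.integrableOn_isCompact isCompact_Icc
  have hfle : ∀ t ∈ Icc (0:ℝ) τ, f t ≤ c + ∫ s in (0:ℝ)..t, L * f s := by
    intro t ht
    have hfi : IntervalIntegrable f volume 0 t := by
      rw [intervalIntegrable_iff, uIoc_of_le ht.1]
      exact hfint.mono_set ((Ioc_subset_Icc_self).trans (Icc_subset_Icc le_rfl ht.2))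
    have heq : t + g t = ∫ s in (0:ℝ)..t, (1 + ‖v s‖) := by
      rw [intervalIntegral.integral_add (intervalIntegrable_const)
        (hIvN 0 t le_rfl ht.1 ht.2)]
      simp [hg]
    have hmono2 : (∫ s in (0:ℝ)..t, (1 + ‖v s‖)) ≤ ∫ s in (0:ℝ)..t, L * f s := by
      apply intervalIntegral.integral_mono_ae_restrict ht.1
        ((intervalIntegrable_const).add (hIvN 0 t le_rfl ht.1 ht.2)) (hfi.const_mul L)
      have hsub := ae_restrict_of_ae_restrict_of_subset
        (Icc_subset_Icc le_rfl ht.2) haeM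
      filter_upwards [hsub, ae_restrict_mem measurableSet_Icc] with s hs1 hs2
      have hLc : L * c = M + 1 := by
        rw [hc]; field_simp
      simp only [hf]
      calc 1 + ‖v s‖ ≤ 1 + (M + L * s + L * g s) := by linarith
        _ = L * (s + g s + c) := by rw [mul_add, mul_add, hLc]; ring
    simp only [hf]
    linarith
  have hgron := my_gronwall f τ c L hτ0.le hL.le hfmono hfint hfle
  have hgR : ∀ t ∈ Icc (0:ℝ) τ, g t ≤ R := by
    intro t ht
    have h1 := hgron t ht
    have h2 : Real.exp (L * t) ≤ Real.exp (L * T) :=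
      Real.exp_le_exp.2 (mul_le_mul_of_nonneg_left (ht.2.trans hττ) hL.le)
    have h3 : c * Real.exp (L * t) ≤ c * Real.exp (L * T) :=
      mul_le_mul_of_nonneg_left h2 hc0
    have h4 : c * Real.exp (L * T) - c = (Real.exp (L * T) - 1) * (M + 1) / L := by
      rw [hc]; field_simp
    simp only [hf] at h1
    linarith [ht.1]
  have hdR : ∀ s ∈ Icc (0:ℝ) τ, infDist (x s) X₀ ≤ R := by
    intro s hs
    refine (infDist_le_dist_of_mem hx0).trans ?_
    rw [dist_eq_norm]
    exact (hxag s hs).trans (hgR s hs)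
  have hLip : ∀ a b : ℝ, 0 ≤ a → a ≤ b → b ≤ τ → ‖x b - x a‖ ≤ P * (b - a) := by
    intro a b ha hab hbτ
    rw [hxd a b ha hab hbτ]
    refine (intervalIntegral.norm_integral_le_integral_norm hab).trans ?_
    have : (∫ s in a..b, ‖v s‖) ≤ ∫ s in a..b, P := by
      apply intervalIntegral.integral_mono_ae_restrict hab
        (hIvN a b ha hab hbτ) (intervalIntegrable_const)
      have hsub := ae_restrict_of_ae_restrict_of_subset (Icc_subset_Icc ha hbτ) hvFIcc
      filter_upwards [hsub, ae_restrict_mem measurableSet_Icc] with s hs1 hs2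
      have hsτ : s ∈ Icc (0:ℝ) τ := ⟨ha.trans hs2.1, hs2.2.trans hbτ⟩
      exact hPbd s ⟨hsτ.1, hsτ.2.trans hττ⟩ (x s) (hdR s hsτ) (v s) hs1
    rw [intervalIntegral.integral_const, smul_eq_mul] at this
    linarith [this]
  -- basic facts about y
  have hyx : ∀ n : ℕ, ‖x ((n:ℝ) * h) - y n‖ ≤ δ := fun n => hyδ _
  have htmem : ∀ n : ℕ, n ≤ ν → ((n:ℝ) * h) ∈ Icc (0:ℝ) τ := by
    intro n hn
    constructor
    · positivity
    · have : (n:ℝ) ≤ (ν:ℝ) := by exact_mod_cast hn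
      nlinarith [hhpos.le]
  -- Euler step
  have hstep : ∀ n < ν, ∃ w ∈ F ((n:ℝ) * h) (y n),
      ‖y (n+1) - (y n + h • w)‖ ≤ L * (P + 1) * h ^ 2 + (2 + L * h) * δ := by
    intro n hn
    set a : ℝ := (n:ℝ) * h with ha
    set b : ℝ := ((n:ℝ) + 1) * h with hb
    have ha0 : 0 ≤ a := by positivity
    have hba0 : b - a = h := by rw [ha, hb]; ring
    have hab : a ≤ b := by linarith [hhpos]
    have hbτ : b ≤ τ := by
      have h1 : ((n:ℝ) + 1) ≤ (ν:ℝ) := by exact_mod_cast hn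
      have h2 : b ≤ (ν:ℝ) * h := by
        rw [hb]; exact mul_le_mul_of_nonneg_right h1 hhpos.le
      linarith [hνh]
    have haτ : a ≤ τ := hab.trans hbτ
    have haT : a ∈ Icc (0:ℝ) T := ⟨ha0, haτ.trans hττ⟩
    have hKne : (F a (y n)).Nonempty := hFne a haT _
    have hKcpt : IsCompact (F a (y n)) := hFcpt a haT _
    set ε : ℝ := L * (P + 1) * h + L * δ with hε
    have hε0 : 0 ≤ ε := by
      have e1 : 0 ≤ L * (P + 1) * h :=
        mul_nonneg (mul_nonneg hL.le (by linarith)) hhpos.le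
      have e2 : 0 ≤ L * δ := mul_nonneg hL.le hδ0.le
      rw [hε]; linarith
    set S := F a (y n) + closedBall (0 : Euc d) ε with hS
    have hScvx : Convex ℝ S := (hFcvx a haT _).add (convex_closedBall _ _)
    have hScl : IsClosed S := (hKcpt.add (isCompact_closedBall _ _)).isClosed
    have hba : b - a = h := by rw [hb, ha]; ring
    have hμ0 : volume (Ioc a b) ≠ 0 := by
      rw [Real.volume_Ioc]
      exact (ENNReal.ofReal_pos.2 (by rw [hba]; exact hhpos)).ne'
    have hμtop : volume (Ioc a b) ≠ ⊤ := by
      rw [Real.volume_Ioc]; exact ENNReal.ofReal_ne_top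
    have hvab : IntegrableOn v (Ioc a b) :=
      hvIcc.mono_set ((Ioc_subset_Icc_self).trans (Icc_subset_Icc ha0 hbτ))
    have hmemae : ∀ᵐ s ∂(volume.restrict (Ioc a b)), v s ∈ S := by
      have h1 := ae_restrict_of_ae_restrict_of_subset
        ((Ioc_subset_Icc_self).trans (Icc_subset_Icc ha0 hbτ)) hvFIcc
      filter_upwards [h1, ae_restrict_mem measurableSet_Ioc] with s hsv hs
      have hsτ : s ∈ Icc (0:ℝ) τ := ⟨ha0.trans hs.1.le, hs.2.trans hbτ⟩
      have hsT : s ∈ Icc (0:ℝ) T := ⟨hsτ.1, hsτ.2.trans hττ⟩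
      have hED : EMetric.hausdorffEdist (F s (x s)) (F a (y n)) ≠ ⊤ :=
        hausdorffEdist_ne_top_of_nonempty_of_bounded (hFne s hsT (x s))
          hKne (hFcpt s hsT (x s)).isBounded hKcpt.isBounded
      obtain ⟨w', hw', hdw'⟩ := hKcpt.exists_infDist_eq_dist hKne (v s)
      have hBnd : dist (v s) w' ≤ ε := by
        rw [← hdw']
        refine ((infDist_le_hausdorffDist_of_mem hsv hED).trans
          (hFlip s hsT a haT (x s) (y n))).trans ?_
        have e1 : |s - a| ≤ h := by
          rw [abs_of_nonneg (by linarith [hs.1.le])]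
          have := hs.2; rw [hb] at this; rw [ha]; linarith
        have e2 : ‖x s - y n‖ ≤ P * h + δ := by
          have eL := hLip a s ha0 hs.1.le hsτ.2
          have eδ : ‖x a - y n‖ ≤ δ := hyx n
          calc ‖x s - y n‖ ≤ ‖x s - x a‖ + ‖x a - y n‖ := by
                have := norm_add_le (x s - x a) (x a - y n)
                simpa using this
            _ ≤ P * (s - a) + δ := by linarith
            _ ≤ P * h + δ := by
                have e3 : s - a ≤ h := by
                  have := hs.2
                  rw [hb] at this
                  rw [ha]; linarith
                have := mul_le_mul_of_nonneg_left e3 hP.le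
                linarith
        have f1 : L * |s - a| ≤ L * h := mul_le_mul_of_nonneg_left e1 hL.le
        have f2 : L * ‖x s - y n‖ ≤ L * (P * h + δ) := mul_le_mul_of_nonneg_left e2 hL.le
        have f3 : L * h + L * (P * h + δ) = L * (P + 1) * h + L * δ := by ring
        rw [hε]
        linarith
      have hvs : v s = w' + (v s - w') := by abel
      have hclose : v s - w' ∈ closedBall (0 : Euc d) ε := by
        rw [mem_closedBall_zero_iff, ← dist_eq_norm]
        exact hBnd
      rw [hvs]
      exact add_mem_add hw' hclose
    have hzS : (⨍ s in Ioc a b, v s) ∈ S :=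
      hScvx.set_average_mem hScl hμ0 hμtop hmemae hvab
    rw [hS, Set.mem_add] at hzS
    obtain ⟨w, hwK, e, heB, hwe⟩ := hzS
    have heε : ‖e‖ ≤ ε := mem_closedBall_zero_iff.1 heB
    have hInt : x b - x a = h • (⨍ s in Ioc a b, v s) := by
      rw [hxd a b ha0 hab hbτ, intervalIntegral.integral_of_le hab, setAverage_eq,
        Real.volume_real_Ioc_of_le hab, hba]
      rw [smul_inv_smul₀ (ne_of_gt hhpos)]
    have hxb : x b - x a = h • w + h • e := by
      rw [hInt, ← hwe, smul_add]
    have hb1 : ‖x b - y (n+1)‖ ≤ δ := by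
      have hcast : (((n+1 : ℕ)):ℝ) * h = b := by push_cast [hb]; ring
      have := hyx (n+1)
      rwa [hcast] at this
    have ha1 : ‖x a - y n‖ ≤ δ := hyx n
    refine ⟨w, hwK, ?_⟩
    have hid : y (n+1) - (y n + h • w)
        = (x b - x a - h • w) + (y (n+1) - x b) + (x a - y n) := by abel
    have hnw : ‖x b - x a - h • w‖ ≤ h * ε := by
      have : x b - x a - h • w = h • e := by rw [hxb]; abel
      rw [this, norm_smul, Real.norm_eq_abs, abs_of_nonneg hhpos.le]
      exact mul_le_mul_of_nonneg_left heε hhpos.le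
    have hne : ‖y (n+1) - x b‖ ≤ δ := by rwa [norm_sub_rev]
    calc ‖y (n+1) - (y n + h • w)‖
        ≤ ‖x b - x a - h • w‖ + ‖y (n+1) - x b‖ + ‖x a - y n‖ := by
          rw [hid]; exact norm_add₃_le
      _ ≤ h * ε + δ + δ := by linarith
      _ = L * (P + 1) * h ^ 2 + (2 + L * h) * δ := by rw [hε]; ring
  refine ⟨y, ⟨⟨?_, ?_⟩, ?_⟩, ?_⟩
  · constructor
    · have h0 : ‖x (((0:ℕ):ℝ) * h) - y 0‖ ≤ δ := hyx 0
      have hx00 : x (((0:ℕ):ℝ) * h) = x 0 := by norm_num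
      refine (infDist_le_dist_of_mem hx0).trans ?_
      rw [dist_comm, dist_eq_norm, ← hx00]
      exact h0
    · exact hstep
  · -- constraint
    intro n hn
    have ht := htmem n hn
    have hxAn : x ((n:ℝ) * h) ∈ A ((n:ℝ) * h) := hxA _ ht
    refine (infDist_le_dist_of_mem hxAn).trans ?_
    rw [dist_comm, dist_eq_norm]
    exact hyx n
  · intro n _
    exact hyΔ _
  · intro n _
    exact hyx n
end
end

section
/- (i) The function x(t) = (−sin t, cos t) is a constrained solution on [0,π]; (ii) for every τ > π there is no constrained solution on [0,τ]; (iii) for every h > 0 one has (0,1) + h·f(0,1) = (−h, 1) ∉ A, and consequently there is no sequence (y_n)_{n=0}^{ν} with ν ≥ 1, y_0 = (0,1), y_{n+1} = y_n + h·f(y_n) for 0 ≤ n ≤ ν−1, and y_n ∈ A for all 0 ≤ n ≤ ν. -/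
open Set

noncomputable section

/-- the right-hand side `f(x₁,x₂) = (−x₂, x₁)` of Example 4.1. -/
def exF : ℝ × ℝ → ℝ × ℝ := fun p => (-p.2, p.1)

/-- the constraint set `A = {x ∈ ℝ² : x₁² + x₂² = 1, x₁ ≤ 0}`. -/
def exA : Set (ℝ × ℝ) := {p : ℝ × ℝ | p.1 ^ 2 + p.2 ^ 2 = 1 ∧ p.1 ≤ 0}

/-- a constrained solution on `[0,τ]`: `x(0) = (0,1)`, `x'(t) = f(x(t))` and
`x(t) ∈ A` for all `t ∈ [0,τ]`. -/
def IsConstrainedSol (τ : ℝ) (x : ℝ → ℝ × ℝ) : Prop :=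
  x 0 = (0, 1) ∧ (∀ t ∈ Icc (0:ℝ) τ, HasDerivAt x (exF (x t)) t) ∧
    ∀ t ∈ Icc (0:ℝ) τ, x t ∈ exA

lemma sol_unique (τ : ℝ) (x : ℝ → ℝ × ℝ) (hx0 : x 0 = (0, 1))
    (hder : ∀ t ∈ Icc (0:ℝ) τ, HasDerivAt x (exF (x t)) t) :
    ∀ t ∈ Icc (0:ℝ) τ, x t = (-Real.sin t, Real.cos t) := by
  have h1 : ∀ t ∈ Icc (0:ℝ) τ, HasDerivAt (fun s => (x s).1) (-(x t).2) t := by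
    intro t ht
    exact ((ContinuousLinearMap.fst ℝ ℝ ℝ).hasFDerivAt.comp_hasDerivAt t (hder t ht))
  have h2 : ∀ t ∈ Icc (0:ℝ) τ, HasDerivAt (fun s => (x s).2) ((x t).1) t := by
    intro t ht
    exact ((ContinuousLinearMap.snd ℝ ℝ ℝ).hasFDerivAt.comp_hasDerivAt t (hder t ht))
  set u : ℝ → ℝ := fun s => Real.cos s * (x s).1 + Real.sin s * (x s).2 with hu_def
  set v : ℝ → ℝ := fun s => -Real.sin s * (x s).1 + Real.cos s * (x s).2 with hv_def
  have hu : ∀ t ∈ Icc (0:ℝ) τ, HasDerivAt u 0 t := by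
    intro t ht
    have := (((Real.hasDerivAt_cos t).mul (h1 t ht)).add
      ((Real.hasDerivAt_sin t).mul (h2 t ht)))
    refine this.congr_deriv ?_
    ring
  have hv : ∀ t ∈ Icc (0:ℝ) τ, HasDerivAt v 0 t := by
    intro t ht
    have := ((((Real.hasDerivAt_sin t).neg).mul (h1 t ht)).add
      ((Real.hasDerivAt_cos t).mul (h2 t ht)))
    refine this.congr_deriv ?_
    simp only [Pi.neg_apply]; ring
  have hconst : ∀ (w : ℝ → ℝ), (∀ t ∈ Icc (0:ℝ) τ, HasDerivAt w 0 t) →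
      ∀ t ∈ Icc (0:ℝ) τ, w t = w 0 := by
    intro w hw
    apply constant_of_has_deriv_right_zero
    · intro t ht
      exact (hw t ht).continuousAt.continuousWithinAt
    · intro t ht
      exact (hw t (Ico_subset_Icc_self ht)).hasDerivWithinAt
  have hu0 : u 0 = 0 := by simp [hu_def, hx0]
  have hv0 : v 0 = 1 := by simp [hv_def, hx0]
  intro t ht
  have hut : u t = 0 := (hconst u hu t ht).trans hu0
  have hvt : v t = 1 := (hconst v hv t ht).trans hv0
  have hpyth := Real.sin_sq_add_cos_sq t
  simp only [hu_def, hv_def] at hut hvt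
  have e1 : (x t).1 = -Real.sin t := by
    linear_combination Real.cos t * hut - Real.sin t * hvt - (x t).1 * hpyth
  have e2 : (x t).2 = Real.cos t := by
    linear_combination Real.sin t * hut + Real.cos t * hvt - (x t).2 * hpyth
  exact Prod.ext e1 e2

theorem statement_13 :
    IsConstrainedSol Real.pi (fun t => (-Real.sin t, Real.cos t)) ∧
    (∀ τ : ℝ, Real.pi < τ → ¬ ∃ x : ℝ → ℝ × ℝ, IsConstrainedSol τ x) ∧
    (∀ h : ℝ, 0 < h →
      (((0:ℝ), (1:ℝ)) + h • exF ((0:ℝ), (1:ℝ)) = (-h, 1) ∧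
        ((-h, (1:ℝ)) : ℝ × ℝ) ∉ exA ∧
        ¬ ∃ (ν : ℕ) (y : ℕ → ℝ × ℝ), 1 ≤ ν ∧ y 0 = (0, 1) ∧
          (∀ n < ν, y (n + 1) = y n + h • exF (y n)) ∧ ∀ n ≤ ν, y n ∈ exA)) := by
  refine ⟨⟨by simp, ?_, ?_⟩, ?_, ?_⟩
  · intro t _
    have := ((Real.hasDerivAt_sin t).neg).prodMk (Real.hasDerivAt_cos t)
    simpa [exF] using this
  · intro t ht
    constructor
    · have := Real.sin_sq_add_cos_sq t
      simp only
      nlinarith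
    · simp only
      have := Real.sin_nonneg_of_nonneg_of_le_pi ht.1 ht.2
      linarith
  · rintro τ hτ ⟨x, hx0, hder, hA⟩
    set ε : ℝ := min (τ - Real.pi) (Real.pi / 2) with hε_def
    have hπ := Real.pi_pos
    have hε : 0 < ε := lt_min (by linarith) (by linarith)
    have hεle : ε ≤ Real.pi / 2 := min_le_right _ _
    set t₀ : ℝ := Real.pi + ε with ht₀_def
    have ht₀ : t₀ ∈ Icc (0:ℝ) τ := by
      constructor
      · positivity
      · have : ε ≤ τ - Real.pi := min_le_left _ _
        simp only [ht₀_def]; linarith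
    have hxt := sol_unique τ x hx0 hder t₀ ht₀
    have hst : Real.sin t₀ = -Real.sin ε := by
      simp [ht₀_def, Real.sin_add]
    have hsin : 0 < Real.sin ε := Real.sin_pos_of_pos_of_lt_pi hε (by linarith)
    have hle := (hA t₀ ht₀).2
    rw [hxt] at hle
    simp only at hle
    rw [hst] at hle
    linarith
  · intro h hh
    refine ⟨?_, ?_, ?_⟩
    · simp [exF, Prod.ext_iff]
    · intro ⟨hmem, _⟩
      simp only at hmem
      nlinarith
    · rintro ⟨ν, y, hν, hy0, hrec, hmem⟩
      have h1 : y 1 = (-h, 1) := by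
        have := hrec 0 (by omega)
        rw [hy0] at this
        simp [exF, Prod.ext_iff] at this ⊢
        exact this
      have := hmem 1 hν
      rw [h1] at this
      obtain ⟨hm, _⟩ := this
      simp only at hm
      nlinarith

end
end

section
/- Let N ≥ 1 be an integer, β ≥ 0, P > 0 and 1 ≤ ν ≤ N, and let (y_n)_{n=0}^{ν} be a sequence in ℝ^d with y_{n+1} ∈ y_n + h_N·F(t_{N,n}, y_n) + B̄(0, β) for 0 ≤ n ≤ ν−1, and suppose ‖v‖ ≤ P for every 0 ≤ n ≤ ν−1 and every v ∈ F(t_{N,n}, y_n). Let y be the piecewise linear interpolation of (y_n). Then for every 0 ≤ n ≤ ν−1 and every t ∈ [t_{N,n}, t_{N,n+1}): ‖(y_{n+1} − y_n)/h_N‖ ≤ P + β/h_N, and dist((t, y(t), (y_{n+1} − y_n)/h_N), graph F) ≤ (1 + P + β/h_N)·h_N + β/h_N, where graph F = {(s,x,v) : s ∈ [0,T], v ∈ F(s,x)} and ℝ × ℝ^d × ℝ^d carries the norm |r| + ‖x‖ + ‖v‖. -/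
open MeasureTheory Metric Set Filter
open scoped RealInnerProductSpace

noncomputable section

theorem statement_14
    (d : ℕ) (hd : 1 ≤ d) (T L : ℝ) (hT : 0 < T) (hL : 0 < L)
    (F : ℝ → Euc d → Set (Euc d))
    (hFne : ∀ t ∈ Icc (0:ℝ) T, ∀ x : Euc d, (F t x).Nonempty)
    (hFcvx : ∀ t ∈ Icc (0:ℝ) T, ∀ x : Euc d, Convex ℝ (F t x))
    (hFcpt : ∀ t ∈ Icc (0:ℝ) T, ∀ x : Euc d, IsCompact (F t x))
    (hFlip : ∀ t ∈ Icc (0:ℝ) T, ∀ t' ∈ Icc (0:ℝ) T, ∀ x x' : Euc d,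
      hausdorffDist (F t x) (F t' x') ≤ L * |t - t'| + L * ‖x - x'‖)
    (N : ℕ) (hN : 1 ≤ N) (β P : ℝ) (hβ : 0 ≤ β) (hP : 0 < P)
    (ν : ℕ) (hν1 : 1 ≤ ν) (hνN : ν ≤ N) (y : ℕ → Euc d)
    (hy : ∀ n < ν, ∃ v ∈ F ((n : ℝ) * (T / N)) (y n),
      ‖y (n + 1) - (y n + (T / N) • v)‖ ≤ β)
    (hbd : ∀ n < ν, ∀ v ∈ F ((n : ℝ) * (T / N)) (y n), ‖v‖ ≤ P) :
    ∀ n < ν, ∀ t ∈ Ico ((n : ℝ) * (T / N)) (((n : ℝ) + 1) * (T / N)),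
      ‖(T / N)⁻¹ • (y (n + 1) - y n)‖ ≤ P + β / (T / N) ∧
      graphDist F T
          (t, y n + (t - (n : ℝ) * (T / N)) • ((T / N)⁻¹ • (y (n + 1) - y n)),
            (T / N)⁻¹ • (y (n + 1) - y n)) ≤
        (1 + P + β / (T / N)) * (T / N) + β / (T / N) := by
  intro n hn t ht
  have hNpos : (0:ℝ) < N := by exact_mod_cast Nat.lt_of_lt_of_le Nat.zero_lt_one hN
  have hh : (0:ℝ) < T / N := div_pos hT hNpos
  obtain ⟨v, hvF, hvβ⟩ := hy n hn
  have hvP : ‖v‖ ≤ P := hbd n hn v hvF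
  set h : ℝ := T / N with hdef
  -- norm of difference
  have hdiff : ‖y (n + 1) - y n‖ ≤ β + h * ‖v‖ := by
    have : y (n + 1) - y n = (y (n + 1) - (y n + h • v)) + h • v := by abel
    rw [this]
    calc ‖(y (n + 1) - (y n + h • v)) + h • v‖
        ≤ ‖y (n + 1) - (y n + h • v)‖ + ‖h • v‖ := norm_add_le _ _
      _ ≤ β + h * ‖v‖ := by
          rw [norm_smul, Real.norm_eq_abs, abs_of_pos hh]
          exact add_le_add hvβ le_rfl
  have hwnorm : ‖h⁻¹ • (y (n + 1) - y n)‖ ≤ P + β / h := by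
    rw [norm_smul, Real.norm_eq_abs, abs_of_pos (inv_pos.mpr hh)]
    calc h⁻¹ * ‖y (n + 1) - y n‖ ≤ h⁻¹ * (β + h * ‖v‖) := by
          exact mul_le_mul_of_nonneg_left hdiff (le_of_lt (inv_pos.mpr hh))
      _ = β / h + ‖v‖ := by field_simp
      _ ≤ P + β / h := by
          have := hvP
          linarith
  refine ⟨hwnorm, ?_⟩
  -- second part
  have hwv : ‖h⁻¹ • (y (n + 1) - y n) - v‖ ≤ β / h := by
    have hrw : h⁻¹ • (y (n + 1) - y n) - v = h⁻¹ • (y (n + 1) - (y n + h • v)) := by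
      rw [smul_sub, smul_sub, smul_add, smul_smul, inv_mul_cancel₀ (ne_of_gt hh), one_smul]
      abel
    rw [hrw, norm_smul, Real.norm_eq_abs, abs_of_pos (inv_pos.mpr hh)]
    rw [div_eq_inv_mul]
    exact mul_le_mul_of_nonneg_left hvβ (le_of_lt (inv_pos.mpr hh))
  have hsIcc : (n : ℝ) * h ∈ Icc (0:ℝ) T := by
    constructor
    · positivity
    · have hn' : (n : ℝ) ≤ N := by exact_mod_cast le_trans (le_of_lt hn) hνN
      calc (n : ℝ) * h ≤ (N : ℝ) * h := by
            exact mul_le_mul_of_nonneg_right hn' (le_of_lt hh)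
        _ = T := by rw [hdef]; field_simp
  set w : Euc d := h⁻¹ • (y (n + 1) - y n) with wdef
  have hmem : (|t - (n : ℝ) * h| + ‖(y n + (t - (n : ℝ) * h) • w) - y n‖ + ‖w - v‖) ∈
      {r : ℝ | ∃ s ∈ Icc (0:ℝ) T, ∃ x, ∃ v' ∈ F s x,
        r = |t - s| + ‖(y n + (t - (n : ℝ) * h) • w) - x‖ + ‖w - v'‖} :=
    ⟨(n : ℝ) * h, hsIcc, y n, v, hvF, rfl⟩
  have hbdd : BddBelow {r : ℝ | ∃ s ∈ Icc (0:ℝ) T, ∃ x, ∃ v' ∈ F s x,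
      r = |t - s| + ‖(y n + (t - (n : ℝ) * h) • w) - x‖ + ‖w - v'‖} := by
    refine ⟨0, ?_⟩
    rintro r ⟨s, _, x, v', _, rfl⟩
    positivity
  have hle : graphDist F T (t, y n + (t - (n : ℝ) * h) • w, w) ≤
      |t - (n : ℝ) * h| + ‖(y n + (t - (n : ℝ) * h) • w) - y n‖ + ‖w - v‖ :=
    csInf_le hbdd hmem
  refine le_trans hle ?_
  obtain ⟨ht1, ht2⟩ := ht
  have htnn : 0 ≤ t - (n : ℝ) * h := by linarith
  have hth : t - (n : ℝ) * h ≤ h := by nlinarith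
  have e1 : |t - (n : ℝ) * h| ≤ h := by rw [abs_of_nonneg htnn]; exact hth
  have e2 : ‖(y n + (t - (n : ℝ) * h) • w) - y n‖ ≤ h * (P + β / h) := by
    have : (y n + (t - (n : ℝ) * h) • w) - y n = (t - (n : ℝ) * h) • w := by abel
    rw [this, norm_smul, Real.norm_eq_abs, abs_of_nonneg htnn]
    have hw0 : 0 ≤ ‖w‖ := norm_nonneg _
    calc (t - (n : ℝ) * h) * ‖w‖ ≤ h * ‖w‖ := mul_le_mul_of_nonneg_right hth hw0
      _ ≤ h * (P + β / h) := mul_le_mul_of_nonneg_left hwnorm (le_of_lt hh)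
  linarith [hwv, e1, e2]
end
end

section
/- Let N ≥ 1 be an integer, P > 0, β_N = L(P+1)·h_N², and 1 ≤ ν ≤ N, and let (y_n)_{n=0}^{ν} be a sequence in ℝ^d with y_{n+1} ∈ y_n + h_N·F(t_{N,n}, y_n) + B̄(0, β_N) for 0 ≤ n ≤ ν−1, and suppose ‖v‖ ≤ P for every 0 ≤ n ≤ ν−1 and every v ∈ F(t_{N,n}, y_n). Let y be the piecewise linear interpolation of (y_n). Then for every 0 ≤ n ≤ ν−1 and every t ∈ [t_{N,n}, t_{N,n+1}): dist((y_{n+1} − y_n)/h_N, F(t, y(t))) ≤ L(P+1)·(2 + L·h_N)·h_N. -/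
open MeasureTheory Metric Set Filter
open scoped RealInnerProductSpace

noncomputable section

theorem statement_15
    (d : ℕ) (hd : 1 ≤ d) (T L : ℝ) (hT : 0 < T) (hL : 0 < L)
    (F : ℝ → Euc d → Set (Euc d))
    (hFne : ∀ t ∈ Icc (0:ℝ) T, ∀ x : Euc d, (F t x).Nonempty)
    (hFcvx : ∀ t ∈ Icc (0:ℝ) T, ∀ x : Euc d, Convex ℝ (F t x))
    (hFcpt : ∀ t ∈ Icc (0:ℝ) T, ∀ x : Euc d, IsCompact (F t x))
    (hFlip : ∀ t ∈ Icc (0:ℝ) T, ∀ t' ∈ Icc (0:ℝ) T, ∀ x x' : Euc d,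
      hausdorffDist (F t x) (F t' x') ≤ L * |t - t'| + L * ‖x - x'‖)
    (N : ℕ) (hN : 1 ≤ N) (P : ℝ) (hP : 0 < P)
    (ν : ℕ) (hν1 : 1 ≤ ν) (hνN : ν ≤ N) (y : ℕ → Euc d)
    (hy : ∀ n < ν, ∃ v ∈ F ((n : ℝ) * (T / N)) (y n),
      ‖y (n + 1) - (y n + (T / N) • v)‖ ≤ L * (P + 1) * (T / N) ^ 2)
    (hbd : ∀ n < ν, ∀ v ∈ F ((n : ℝ) * (T / N)) (y n), ‖v‖ ≤ P) :
    ∀ n < ν, ∀ t ∈ Ico ((n : ℝ) * (T / N)) (((n : ℝ) + 1) * (T / N)),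
      infDist ((T / N)⁻¹ • (y (n + 1) - y n))
          (F t (y n + (t - (n : ℝ) * (T / N)) • ((T / N)⁻¹ • (y (n + 1) - y n)))) ≤
        L * (P + 1) * (2 + L * (T / N)) * (T / N) := by

  intro n hn t ht
  have hNpos : (0:ℝ) < N := by exact_mod_cast Nat.lt_of_lt_of_le Nat.zero_lt_one hN
  have hh : (0:ℝ) < T / N := div_pos hT hNpos
  obtain ⟨v, hvF, hvb⟩ := hy n hn
  have hvP : ‖v‖ ≤ P := hbd n hn v hvF
  set h : ℝ := T / N with hhdef
  set w : Euc d := h⁻¹ • (y (n+1) - y n) with hwdef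
  have hwv : ‖w - v‖ ≤ L * (P+1) * h := by
    have e : w - v = h⁻¹ • (y (n+1) - (y n + h • v)) := by
      rw [hwdef, smul_sub, smul_sub, smul_add, smul_smul, inv_mul_cancel₀ hh.ne', one_smul]
      abel
    rw [e, norm_smul, norm_inv, Real.norm_eq_abs, abs_of_pos hh]
    calc h⁻¹ * ‖y (n+1) - (y n + h • v)‖ ≤ h⁻¹ * (L * (P+1) * h ^ 2) := by
          exact mul_le_mul_of_nonneg_left hvb (inv_nonneg.mpr hh.le)
      _ = L * (P+1) * h := by field_simp
  have hwP : ‖w‖ ≤ P + L * (P+1) * h := by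
    calc ‖w‖ = ‖(w - v) + v‖ := by rw [sub_add_cancel]
      _ ≤ ‖w - v‖ + ‖v‖ := norm_add_le _ _
      _ ≤ L * (P+1) * h + P := add_le_add hwv hvP
      _ = P + L * (P+1) * h := by ring
  -- memberships of times in [0, T]
  have hnh0 : (0:ℝ) ≤ (n:ℝ) * h := mul_nonneg (Nat.cast_nonneg n) hh.le
  have hn1T : ((n:ℝ) + 1) * h ≤ T := by
    have : ((n:ℝ) + 1) ≤ (N:ℝ) := by exact_mod_cast Nat.succ_le_of_lt (lt_of_lt_of_le hn hνN)
    calc ((n:ℝ) + 1) * h ≤ (N:ℝ) * h := mul_le_mul_of_nonneg_right this hh.le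
      _ = T := by rw [hhdef]; field_simp
  have htT : t ∈ Icc (0:ℝ) T := ⟨le_trans hnh0 ht.1, le_trans ht.2.le hn1T⟩
  have hnhT : (n:ℝ) * h ∈ Icc (0:ℝ) T := ⟨hnh0, by nlinarith [ht.1, ht.2]⟩
  set yt : Euc d := y n + (t - (n:ℝ) * h) • w with hyt
  have hne1 := hFne _ hnhT (y n)
  have hne2 := hFne _ htT yt
  have hedist : EMetric.hausdorffEdist (F ((n:ℝ) * h) (y n)) (F t yt) ≠ ⊤ :=
    Metric.hausdorffEdist_ne_top_of_nonempty_of_bounded hne1 hne2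
      (hFcpt _ hnhT (y n)).isBounded (hFcpt _ htT yt).isBounded
  have h1 : infDist v (F t yt) ≤ hausdorffDist (F ((n:ℝ) * h) (y n)) (F t yt) :=
    infDist_le_hausdorffDist_of_mem hvF hedist
  have h2 : hausdorffDist (F ((n:ℝ) * h) (y n)) (F t yt) ≤
      L * |(n:ℝ) * h - t| + L * ‖y n - yt‖ := hFlip _ hnhT _ htT _ _
  have htn0 : 0 ≤ t - (n:ℝ) * h := sub_nonneg.mpr ht.1
  have htnh : t - (n:ℝ) * h ≤ h := by nlinarith [ht.2]
  have habs : |(n:ℝ) * h - t| ≤ h := by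
    rw [abs_sub_comm, abs_of_nonneg htn0]; exact htnh
  have hynorm : ‖y n - yt‖ ≤ h * ‖w‖ := by
    have : y n - yt = -((t - (n:ℝ) * h) • w) := by rw [hyt]; abel
    rw [this, norm_neg, norm_smul, Real.norm_eq_abs, abs_of_nonneg htn0]
    exact mul_le_mul_of_nonneg_right htnh (norm_nonneg _)
  have h3 : infDist w (F t yt) ≤ infDist v (F t yt) + dist w v :=
    infDist_le_infDist_add_dist
  have hdwv : dist w v = ‖w - v‖ := dist_eq_norm _ _
  have hwnn : (0:ℝ) ≤ ‖w‖ := norm_nonneg _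
  calc infDist w (F t yt) ≤ infDist v (F t yt) + ‖w - v‖ := by rw [← hdwv]; exact h3
    _ ≤ (L * |(n:ℝ) * h - t| + L * ‖y n - yt‖) + ‖w - v‖ :=
        add_le_add (le_trans h1 h2) le_rfl
    _ ≤ (L * h + L * (h * (P + L * (P+1) * h))) + L * (P+1) * h := by
        gcongr
        exact le_trans hynorm (mul_le_mul_of_nonneg_left hwP hh.le)
    _ = L * (P + 1) * (2 + L * h) * h := by ring
end
end
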